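/- Fix α ∈ (1/3,1/2), T > 0, an α-Hölder rough path 𝐗, a monotone family of interpolation spaces (B_η)_{η∈ℝ}, and let G satisfy assumption (G). Let (y, G(y)) ∈ D^{2α}_{X,γ} be a controlled rough path whose Gubinelli derivative is G(y). Then (G(y), DG(y)G(y)) ∈ D^{2α}_{X,γ−σ} and ‖G(y), DG(y)G(y)‖_{X,2α,γ−σ} ≲ 1 + ‖y, G(y)‖_{X,2α,γ}; in particular the bound is linear (not quadratic) in ‖y, G(y)‖_{X,2α,γ}. -/

import Mathlib

open Set

/-- A monotone family of interpolation spaces: a scale `(B_θ)_{θ ∈ ℝ}` of separable Banach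
spaces realised inside a common ambient real vector space `E`; `Mem θ x` means `x ∈ B_θ`,
`N θ x` denotes the norm `|x|_θ`.  For `β₁ ≤ β₂` the space `B_{β₂}` is contained in `B_{β₁}`
with dense and continuous embedding, and the interpolation inequality holds. -/
structure BanachScale where
  E : Type
  [inst_add : AddCommGroup E]
  [inst_mod : Module ℝ E]
  Mem : ℝ → E → Prop
  N : ℝ → E → ℝ
  mem_zero : ∀ θ : ℝ, Mem θ 0
  mem_add : ∀ (θ : ℝ) (x y : E), Mem θ x → Mem θ y → Mem θ (x + y)
  mem_neg : ∀ (θ : ℝ) (x : E), Mem θ x → Mem θ (-x)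
  mem_smul : ∀ (θ c : ℝ) (x : E), Mem θ x → Mem θ (c • x)
  N_nonneg : ∀ (θ : ℝ) (x : E), 0 ≤ N θ x
  N_zero : ∀ θ : ℝ, N θ 0 = 0
  N_eq_zero : ∀ (θ : ℝ) (x : E), Mem θ x → N θ x = 0 → x = 0
  N_add : ∀ (θ : ℝ) (x y : E), Mem θ x → Mem θ y → N θ (x + y) ≤ N θ x + N θ y
  N_smul : ∀ (θ c : ℝ) (x : E), N θ (c • x) = |c| * N θ x
  mem_mono : ∀ ⦃β₁ β₂ : ℝ⦄, β₁ ≤ β₂ → ∀ x : E, Mem β₂ x → Mem β₁ x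
  embed_bound : ∀ ⦃β₁ β₂ : ℝ⦄, β₁ ≤ β₂ → ∃ C > (0:ℝ), ∀ x : E, Mem β₂ x → N β₁ x ≤ C * N β₂ x
  embed_dense : ∀ ⦃β₁ β₂ : ℝ⦄, β₁ ≤ β₂ → ∀ x : E, Mem β₁ x → ∀ ε > (0:ℝ),
    ∃ y : E, Mem β₂ y ∧ N β₁ (x - y) < ε
  complete : ∀ (θ : ℝ) (u : ℕ → E), (∀ n, Mem θ (u n)) →
    (∀ ε > (0:ℝ), ∃ M : ℕ, ∀ m ≥ M, ∀ n ≥ M, N θ (u m - u n) < ε) →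
    ∃ x : E, Mem θ x ∧ ∀ ε > (0:ℝ), ∃ M : ℕ, ∀ n ≥ M, N θ (u n - x) < ε
  separable : ∀ θ : ℝ, ∃ D : Set E, D.Countable ∧ (∀ x ∈ D, Mem θ x) ∧
    ∀ x : E, Mem θ x → ∀ ε > (0:ℝ), ∃ y ∈ D, N θ (x - y) < ε
  interp : ∀ ⦃θ β γ : ℝ⦄, θ ≤ β → β ≤ γ → ∃ C > (0:ℝ), ∀ x : E, Mem γ x →
    N β x ^ (γ - θ) ≤ C * (N θ x ^ (γ - β) * N γ x ^ (β - θ))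

attribute [instance] BanachScale.inst_add BanachScale.inst_mod

/-- An analytic `C₀`-semigroup `(S(t))_{t ≥ 0}` acting on a scale of Banach spaces,
together with the standard parabolic bounds
`|(S(t) - Id)x|_η ≲ t^σ |x|_{η+σ}` and `|S(t)x|_{η+σ} ≲ t^{-σ} |x|_η` for `σ ∈ [0,1]`,
with constants uniform on compact time intervals. -/
structure ScaleSemigroup (𝓑 : BanachScale) where
  S : ℝ → 𝓑.E →ₗ[ℝ] 𝓑.E
  S_id : ∀ x : 𝓑.E, S 0 x = x
  S_comp : ∀ s t : ℝ, 0 ≤ s → 0 ≤ t → ∀ x : 𝓑.E, S (s + t) x = S s (S t x)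
  S_mem : ∀ (t θ : ℝ) (x : 𝓑.E), 0 ≤ t → 𝓑.Mem θ x → 𝓑.Mem θ (S t x)
  S_bounded : ∀ θ Tm : ℝ, 0 < Tm → ∃ C > (0:ℝ), ∀ (t : ℝ) (x : 𝓑.E), 0 ≤ t → t ≤ Tm →
    𝓑.Mem θ x → 𝓑.N θ (S t x) ≤ C * 𝓑.N θ x
  S_strong_cont : ∀ (θ : ℝ) (x : 𝓑.E), 𝓑.Mem θ x → ∀ ε > (0:ℝ), ∃ δ > (0:ℝ),
    ∀ t : ℝ, 0 < t → t < δ → 𝓑.N θ (S t x - x) < ε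
  S_smoothing : ∀ η σ Tm : ℝ, 0 ≤ σ → σ ≤ 1 → 0 < Tm → ∃ C > (0:ℝ),
    ∀ (t : ℝ) (x : 𝓑.E), 0 < t → t ≤ Tm → 𝓑.Mem η x →
      𝓑.Mem (η + σ) (S t x) ∧ 𝓑.N (η + σ) (S t x) ≤ C * t ^ (-σ) * 𝓑.N η x
  S_holdId : ∀ η σ Tm : ℝ, 0 ≤ σ → σ ≤ 1 → 0 < Tm → ∃ C > (0:ℝ),
    ∀ (t : ℝ) (x : 𝓑.E), 0 < t → t ≤ Tm → 𝓑.Mem (η + σ) x →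
      𝓑.N η (S t x - x) ≤ C * t ^ σ * 𝓑.N (η + σ) x

/-- A (one-dimensional) `α`-Hölder rough path `𝐗 = (X, X⁽²⁾)` on `[0,T]`:
`X ∈ C^α`, `X₀ = 0`, `X⁽²⁾ ∈ C^{2α}` on the simplex, satisfying Chen's relation. -/
structure RoughPath (α T : ℝ) where
  X : ℝ → ℝ
  X2 : ℝ → ℝ → ℝ
  X_zero : X 0 = 0
  holderX : ∃ C : ℝ, ∀ s t : ℝ, 0 ≤ s → s ≤ t → t ≤ T → |X t - X s| ≤ C * (t - s) ^ α
  holderX2 : ∃ C : ℝ, ∀ s t : ℝ, 0 ≤ s → s ≤ t → t ≤ T → |X2 s t| ≤ C * (t - s) ^ (2 * α)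
  chen : ∀ s u t : ℝ, 0 ≤ s → s ≤ u → u ≤ t → t ≤ T →
    X2 s t - X2 s u - X2 u t = (X u - X s) * (X t - X u)

/-- The supremum norm `‖f‖_{∞, B_θ}` over `[0,T]`. -/
noncomputable def scaleSupNorm (𝓑 : BanachScale) (θ T : ℝ) (f : ℝ → 𝓑.E) : ℝ :=
  sSup {r : ℝ | ∃ t : ℝ, 0 ≤ t ∧ t ≤ T ∧ r = 𝓑.N θ (f t)}

/-- The `η`-Hölder seminorm (in `B_θ`) of a two-parameter function on `[0,T]`. -/
noncomputable def scaleHolderNorm2 (𝓑 : BanachScale) (θ η T : ℝ) (F : ℝ → ℝ → 𝓑.E) : ℝ :=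
  sSup {r : ℝ | ∃ s t : ℝ, 0 ≤ s ∧ s < t ∧ t ≤ T ∧ r = 𝓑.N θ (F s t) / (t - s) ^ η}

/-- The `η`-Hölder seminorm `‖f‖_{η, B_θ}` over `[0,T]`. -/
noncomputable def scaleHolderNorm (𝓑 : BanachScale) (θ η T : ℝ) (f : ℝ → 𝓑.E) : ℝ :=
  scaleHolderNorm2 𝓑 θ η T fun s t => f t - f s

/-- The `η`-Hölder seminorm of a real-valued path on `[0,T]`. -/
noncomputable def realHolderNorm (η T : ℝ) (X : ℝ → ℝ) : ℝ :=
  sSup {r : ℝ | ∃ s t : ℝ, 0 ≤ s ∧ s < t ∧ t ≤ T ∧ r = |X t - X s| / (t - s) ^ η}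

/-- `f : [0,T] → B_θ` is `η`-Hölder continuous. -/
def IsHolderOn (𝓑 : BanachScale) (θ η T : ℝ) (f : ℝ → 𝓑.E) : Prop :=
  ∃ C : ℝ, ∀ s t : ℝ, 0 ≤ s → s ≤ t → t ≤ T → 𝓑.N θ (f t - f s) ≤ C * (t - s) ^ η

/-- The remainder `R^y_{s,t} = y_t - y_s - y'_s X_{s,t}` of a controlled rough path. -/
def gubRemainder (𝓑 : BanachScale) (X : ℝ → ℝ) (y y' : ℝ → 𝓑.E) (s t : ℝ) : 𝓑.E :=
  y t - y s - (X t - X s) • y' s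

/-- `(y, y')` is a controlled rough path in `D^{2α}_{X,γ}([0,T])`:
`y ∈ C([0,T]; B_γ)`, `y' ∈ C([0,T]; B_{γ-α}) ∩ C^α([0,T]; B_{γ-2α})` and the remainder
`R^y ∈ C^α([0,T]; B_{γ-α}) ∩ C^{2α}([0,T]; B_{γ-2α})`. -/
structure IsControlledPath (𝓑 : BanachScale) (α γ T : ℝ) (X : ℝ → ℝ)
    (y y' : ℝ → 𝓑.E) : Prop where
  mem_y : ∀ t : ℝ, 0 ≤ t → t ≤ T → 𝓑.Mem γ (y t)
  mem_y' : ∀ t : ℝ, 0 ≤ t → t ≤ T → 𝓑.Mem (γ - α) (y' t)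
  cont_y : ∀ t : ℝ, 0 ≤ t → t ≤ T → ∀ ε > (0:ℝ), ∃ δ > (0:ℝ), ∀ s : ℝ, 0 ≤ s → s ≤ T →
    |s - t| < δ → 𝓑.N γ (y s - y t) < ε
  cont_y' : ∀ t : ℝ, 0 ≤ t → t ≤ T → ∀ ε > (0:ℝ), ∃ δ > (0:ℝ), ∀ s : ℝ, 0 ≤ s → s ≤ T →
    |s - t| < δ → 𝓑.N (γ - α) (y' s - y' t) < ε
  holder_y' : ∃ C : ℝ, ∀ s t : ℝ, 0 ≤ s → s ≤ t → t ≤ T →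
    𝓑.N (γ - 2 * α) (y' t - y' s) ≤ C * (t - s) ^ α
  rem_alpha : ∃ C : ℝ, ∀ s t : ℝ, 0 ≤ s → s ≤ t → t ≤ T →
    𝓑.N (γ - α) (gubRemainder 𝓑 X y y' s t) ≤ C * (t - s) ^ α
  rem_two_alpha : ∃ C : ℝ, ∀ s t : ℝ, 0 ≤ s → s ≤ t → t ≤ T →
    𝓑.N (γ - 2 * α) (gubRemainder 𝓑 X y y' s t) ≤ C * (t - s) ^ (2 * α)

/-- The norm `‖(y,y')‖_{X,2α,γ}` on `D^{2α}_{X,γ}([0,T])`. -/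
noncomputable def crpNorm (𝓑 : BanachScale) (α γ T : ℝ) (X : ℝ → ℝ)
    (y y' : ℝ → 𝓑.E) : ℝ :=
  scaleSupNorm 𝓑 γ T y + scaleSupNorm 𝓑 (γ - α) T y'
    + scaleHolderNorm 𝓑 (γ - 2 * α) α T y'
    + scaleHolderNorm2 𝓑 (γ - α) α T (gubRemainder 𝓑 X y y')
    + scaleHolderNorm2 𝓑 (γ - 2 * α) (2 * α) T (gubRemainder 𝓑 X y y')

/-- A partition `a = t_0 < t_1 < ⋯ < t_n = b` of the interval `[a,b]`. -/
structure RPartition (a b : ℝ) where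
  n : ℕ
  t : ℕ → ℝ
  n_pos : 0 < n
  strict : ∀ i : ℕ, i < n → t i < t (i + 1)
  first : t 0 = a
  last : t n = b

/-- The mesh `|π|` of a partition. -/
noncomputable def RPartition.mesh {a b : ℝ} (π : RPartition a b) : ℝ :=
  sSup {r : ℝ | ∃ i : ℕ, i < π.n ∧ r = π.t (i + 1) - π.t i}

/-- The compensated Riemann sum `Σ_{[u,v] ∈ π} S(b - u)[y_u X_{u,v} + y'_u X⁽²⁾_{u,v}]`. -/
noncomputable def convRiemannSum (𝓑 : BanachScale) (Sg : ScaleSemigroup 𝓑)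
    (X : ℝ → ℝ) (X2 : ℝ → ℝ → ℝ) (y y' : ℝ → 𝓑.E) {a b : ℝ} (π : RPartition a b) : 𝓑.E :=
  ∑ i ∈ Finset.range π.n,
    Sg.S (b - π.t i)
      ((X (π.t (i + 1)) - X (π.t i)) • y (π.t i) + X2 (π.t i) (π.t (i + 1)) • y' (π.t i))

/-- `I` is the rough convolution `∫_a^b S(b-r) y_r d𝐗_r`, i.e. the limit in `B_θ` of the
compensated Riemann sums over partitions of `[a,b]` with vanishing mesh. -/
def IsRoughConvolution (𝓑 : BanachScale) (Sg : ScaleSemigroup 𝓑) (X : ℝ → ℝ)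
    (X2 : ℝ → ℝ → ℝ) (y y' : ℝ → 𝓑.E) (θ a b : ℝ) (I : 𝓑.E) : Prop :=
  𝓑.Mem θ I ∧ ∀ ε > (0:ℝ), ∃ δ > (0:ℝ), ∀ π : RPartition a b, π.mesh < δ →
    𝓑.N θ (convRiemannSum 𝓑 Sg X X2 y y' π - I) ≤ ε

/-- Left Riemann sum of a `B`-valued function. -/
noncomputable def intRiemannSum (𝓑 : BanachScale) (f : ℝ → 𝓑.E) {a b : ℝ}
    (π : RPartition a b) : 𝓑.E :=
  ∑ i ∈ Finset.range π.n, (π.t (i + 1) - π.t i) • f (π.t i)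

/-- `I = ∫_a^b f(s) ds` as a `B_θ`-valued Riemann integral. -/
def IsRiemannIntegral (𝓑 : BanachScale) (θ : ℝ) (f : ℝ → 𝓑.E) (a b : ℝ) (I : 𝓑.E) : Prop :=
  𝓑.Mem θ I ∧ ∀ ε > (0:ℝ), ∃ δ > (0:ℝ), ∀ π : RPartition a b, π.mesh < δ →
    𝓑.N θ (intRiemannSum 𝓑 f π - I) ≤ ε

/-- Assumption (F): the drift `F : B_γ → B_{γ-δ}` is locally Lipschitz continuous and
satisfies a linear growth condition. -/
structure AssumptionF (𝓑 : BanachScale) (γ δ : ℝ) (F : 𝓑.E → 𝓑.E) : Prop where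
  maps : ∀ x : 𝓑.E, 𝓑.Mem γ x → 𝓑.Mem (γ - δ) (F x)
  locLip : ∀ R > (0:ℝ), ∃ L : ℝ, ∀ x y : 𝓑.E, 𝓑.Mem γ x → 𝓑.Mem γ y →
    𝓑.N γ x ≤ R → 𝓑.N γ y ≤ R → 𝓑.N (γ - δ) (F x - F y) ≤ L * 𝓑.N γ (x - y)
  linGrowth : ∃ C : ℝ, ∀ x : 𝓑.E, 𝓑.Mem γ x → 𝓑.N (γ - δ) (F x) ≤ C * (1 + 𝓑.N γ x)

/-- Assumption (G): for `θ ∈ {0, α, 2α}` the diffusion coefficient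
`G : B_{γ-θ} → B_{γ-θ-σ}` is three times continuously (Fréchet) differentiable with bounded
derivatives `DG`, `D²G`, `D³G`, and the derivative of `x ↦ DG(x)G(x) : B_{γ-α} → B_{γ-2α-σ}`
is bounded. -/
structure AssumptionG (𝓑 : BanachScale) (α σ γ : ℝ) (G : 𝓑.E → 𝓑.E)
    (DG : 𝓑.E → 𝓑.E →ₗ[ℝ] 𝓑.E)
    (D2G : 𝓑.E → 𝓑.E →ₗ[ℝ] 𝓑.E →ₗ[ℝ] 𝓑.E)
    (D3G : 𝓑.E → 𝓑.E →ₗ[ℝ] 𝓑.E →ₗ[ℝ] 𝓑.E →ₗ[ℝ] 𝓑.E) : Prop where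
  maps : ∀ θ ∈ ({0, α, 2 * α} : Set ℝ), ∀ x : 𝓑.E, 𝓑.Mem (γ - θ) x → 𝓑.Mem (γ - θ - σ) (G x)
  DG_maps : ∀ θ ∈ ({0, α, 2 * α} : Set ℝ), ∀ x h : 𝓑.E, 𝓑.Mem (γ - θ) x → 𝓑.Mem (γ - θ) h →
    𝓑.Mem (γ - θ - σ) (DG x h)
  DG_bound : ∀ θ ∈ ({0, α, 2 * α} : Set ℝ), ∃ C : ℝ, ∀ x h : 𝓑.E, 𝓑.Mem (γ - θ) x →
    𝓑.Mem (γ - θ) h → 𝓑.N (γ - θ - σ) (DG x h) ≤ C * 𝓑.N (γ - θ) h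
  DG_isDeriv : ∀ θ ∈ ({0, α, 2 * α} : Set ℝ), ∀ x : 𝓑.E, 𝓑.Mem (γ - θ) x → ∀ ε > (0:ℝ),
    ∃ δ > (0:ℝ), ∀ h : 𝓑.E, 𝓑.Mem (γ - θ) h → 𝓑.N (γ - θ) h < δ →
      𝓑.N (γ - θ - σ) (G (x + h) - G x - DG x h) ≤ ε * 𝓑.N (γ - θ) h
  D2G_maps : ∀ θ ∈ ({0, α, 2 * α} : Set ℝ), ∀ x h k : 𝓑.E, 𝓑.Mem (γ - θ) x →
    𝓑.Mem (γ - θ) h → 𝓑.Mem (γ - θ) k → 𝓑.Mem (γ - θ - σ) (D2G x h k)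
  D2G_bound : ∀ θ ∈ ({0, α, 2 * α} : Set ℝ), ∃ C : ℝ, ∀ x h k : 𝓑.E, 𝓑.Mem (γ - θ) x →
    𝓑.Mem (γ - θ) h → 𝓑.Mem (γ - θ) k →
    𝓑.N (γ - θ - σ) (D2G x h k) ≤ C * (𝓑.N (γ - θ) h * 𝓑.N (γ - θ) k)
  D2G_isDeriv : ∀ θ ∈ ({0, α, 2 * α} : Set ℝ), ∀ x : 𝓑.E, 𝓑.Mem (γ - θ) x → ∀ ε > (0:ℝ),
    ∃ δ > (0:ℝ), ∀ h : 𝓑.E, 𝓑.Mem (γ - θ) h → 𝓑.N (γ - θ) h < δ → ∀ k : 𝓑.E,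
      𝓑.Mem (γ - θ) k →
      𝓑.N (γ - θ - σ) (DG (x + h) k - DG x k - D2G x h k) ≤ ε * (𝓑.N (γ - θ) h * 𝓑.N (γ - θ) k)
  D3G_maps : ∀ θ ∈ ({0, α, 2 * α} : Set ℝ), ∀ x h k l : 𝓑.E, 𝓑.Mem (γ - θ) x →
    𝓑.Mem (γ - θ) h → 𝓑.Mem (γ - θ) k → 𝓑.Mem (γ - θ) l → 𝓑.Mem (γ - θ - σ) (D3G x h k l)
  D3G_bound : ∀ θ ∈ ({0, α, 2 * α} : Set ℝ), ∃ C : ℝ, ∀ x h k l : 𝓑.E, 𝓑.Mem (γ - θ) x →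
    𝓑.Mem (γ - θ) h → 𝓑.Mem (γ - θ) k → 𝓑.Mem (γ - θ) l →
    𝓑.N (γ - θ - σ) (D3G x h k l) ≤ C * (𝓑.N (γ - θ) h * (𝓑.N (γ - θ) k * 𝓑.N (γ - θ) l))
  D3G_isDeriv : ∀ θ ∈ ({0, α, 2 * α} : Set ℝ), ∀ x : 𝓑.E, 𝓑.Mem (γ - θ) x → ∀ ε > (0:ℝ),
    ∃ δ > (0:ℝ), ∀ h : 𝓑.E, 𝓑.Mem (γ - θ) h → 𝓑.N (γ - θ) h < δ → ∀ k l : 𝓑.E,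
      𝓑.Mem (γ - θ) k → 𝓑.Mem (γ - θ) l →
      𝓑.N (γ - θ - σ) (D2G (x + h) k l - D2G x k l - D3G x h k l)
        ≤ ε * (𝓑.N (γ - θ) h * (𝓑.N (γ - θ) k * 𝓑.N (γ - θ) l))
  D3G_cont : ∀ θ ∈ ({0, α, 2 * α} : Set ℝ), ∀ x : 𝓑.E, 𝓑.Mem (γ - θ) x → ∀ ε > (0:ℝ),
    ∃ δ > (0:ℝ), ∀ x' : 𝓑.E, 𝓑.Mem (γ - θ) x' → 𝓑.N (γ - θ) (x' - x) < δ →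
      ∀ h k l : 𝓑.E, 𝓑.Mem (γ - θ) h → 𝓑.Mem (γ - θ) k → 𝓑.Mem (γ - θ) l →
      𝓑.N (γ - θ - σ) (D3G x' h k l - D3G x h k l)
        ≤ ε * (𝓑.N (γ - θ) h * (𝓑.N (γ - θ) k * 𝓑.N (γ - θ) l))
  DGG_deriv_bounded : ∃ (L : 𝓑.E → 𝓑.E →ₗ[ℝ] 𝓑.E) (C : ℝ),
    (∀ x h : 𝓑.E, 𝓑.Mem (γ - α) x → 𝓑.Mem (γ - α) h →
      𝓑.Mem (γ - 2 * α - σ) (L x h) ∧ 𝓑.N (γ - 2 * α - σ) (L x h) ≤ C * 𝓑.N (γ - α) h) ∧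
    ∀ x : 𝓑.E, 𝓑.Mem (γ - α) x → ∀ ε > (0:ℝ), ∃ δ > (0:ℝ), ∀ h : 𝓑.E, 𝓑.Mem (γ - α) h →
      𝓑.N (γ - α) h < δ →
      𝓑.N (γ - 2 * α - σ) (DG (x + h) (G (x + h)) - DG x (G x) - L x h) ≤ ε * 𝓑.N (γ - α) h

/-- `y` is a (mild) solution on `[0,T']` of the rough evolution equation
`dy = (Ay + F(y))dt + G(y)d𝐗`, `y(0) = y₀`: the pair `(y, G(y))` is a controlled rough
path in `D^{2α}_{X,γ}([0,T'])` and the mild formulation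
`y_t = S(t)y₀ + ∫₀ᵗ S(t-s)F(y_s)ds + ∫₀ᵗ S(t-s)G(y_s)d𝐗_s` holds, the rough convolution
being the limit of the compensated Riemann sums
`Σ S(t-u)[G(y_u)X_{u,v} + DG(y_u)G(y_u)X⁽²⁾_{u,v}]`. -/
structure IsSolution (𝓑 : BanachScale) (Sg : ScaleSemigroup 𝓑) (α γ : ℝ)
    (X : ℝ → ℝ) (X2 : ℝ → ℝ → ℝ) (F G : 𝓑.E → 𝓑.E) (DG : 𝓑.E → 𝓑.E →ₗ[ℝ] 𝓑.E)
    (y₀ : 𝓑.E) (T' : ℝ) (y : ℝ → 𝓑.E) : Prop where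
  controlled : IsControlledPath 𝓑 α γ T' X y fun t => G (y t)
  init : y 0 = y₀
  mild : ∀ t : ℝ, 0 < t → t ≤ T' → ∃ D Z : 𝓑.E,
    IsRiemannIntegral 𝓑 γ (fun s => Sg.S (t - s) (F (y s))) 0 t D ∧
    IsRoughConvolution 𝓑 Sg X X2 (fun s => G (y s)) (fun s => DG (y s) (G (y s)))
      (γ - 2 * α) 0 t Z ∧
    y t = Sg.S t y₀ + D + Z

/-- The Borel σ-algebra of `B_θ`, generated by the `|·|_θ`-balls of `B_θ`,
as a σ-algebra on the ambient space. -/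
def scaleBorel (𝓑 : BanachScale) (θ : ℝ) : MeasurableSpace 𝓑.E :=
  MeasurableSpace.generateFrom
    {s : Set 𝓑.E | ∃ (c : 𝓑.E) (r : ℝ), s = {x | 𝓑.Mem θ x ∧ 𝓑.N θ (x - c) < r}}

namespace BanachScale

lemma N_neg (𝓑 : BanachScale) (θ : ℝ) (x : 𝓑.E) : 𝓑.N θ (-x) = 𝓑.N θ x := by
  rw [← neg_one_smul ℝ x, 𝓑.N_smul]; simp

lemma mem_sub' (𝓑 : BanachScale) (θ : ℝ) {x y : 𝓑.E} (hx : 𝓑.Mem θ x) (hy : 𝓑.Mem θ y) :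
    𝓑.Mem θ (x - y) := by
  rw [sub_eq_add_neg]; exact 𝓑.mem_add θ _ _ hx (𝓑.mem_neg θ _ hy)

lemma N_sub_le' (𝓑 : BanachScale) (θ : ℝ) {x y : 𝓑.E} (hx : 𝓑.Mem θ x) (hy : 𝓑.Mem θ y) :
    𝓑.N θ (x - y) ≤ 𝓑.N θ x + 𝓑.N θ y := by
  rw [sub_eq_add_neg]
  exact (𝓑.N_add θ x (-y) hx (𝓑.mem_neg θ _ hy)).trans (by rw [𝓑.N_neg])

lemma N_sub_rev (𝓑 : BanachScale) (θ : ℝ) (x y : 𝓑.E) :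
    𝓑.N θ (x - y) = 𝓑.N θ (y - x) := by
  rw [← 𝓑.N_neg θ (y - x), neg_sub]

lemma abs_N_sub_N_le (𝓑 : BanachScale) (θ : ℝ) {x y : 𝓑.E} (hx : 𝓑.Mem θ x) (hy : 𝓑.Mem θ y) :
    |𝓑.N θ x - 𝓑.N θ y| ≤ 𝓑.N θ (x - y) := by
  rw [abs_sub_le_iff]
  constructor
  · have h1 : 𝓑.N θ x ≤ 𝓑.N θ (x - y) + 𝓑.N θ y := by
      have h := 𝓑.N_add θ (x - y) y (𝓑.mem_sub' θ hx hy) hy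
      rwa [sub_add_cancel] at h
    linarith
  · have h1 : 𝓑.N θ y ≤ 𝓑.N θ (y - x) + 𝓑.N θ x := by
      have h := 𝓑.N_add θ (y - x) x (𝓑.mem_sub' θ hy hx) hx
      rwa [sub_add_cancel] at h
    have h2 : 𝓑.N θ (y - x) = 𝓑.N θ (x - y) := by rw [← 𝓑.N_neg θ (x - y), neg_sub]
    linarith

/-- Mean value inequality with a constant vector subtracted. -/
lemma mv2 (𝓑 : BanachScale) (θ θ' : ℝ) (F : 𝓑.E → 𝓑.E) (DF : 𝓑.E → 𝓑.E → 𝓑.E)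
    (a h v : 𝓑.E) (Bd : ℝ)
    (hMh : 𝓑.Mem θ h) (hMv : 𝓑.Mem θ' v)
    (hMF : ∀ t ∈ Icc (0:ℝ) 1, 𝓑.Mem θ' (F (a + t • h)))
    (hMDF : ∀ t ∈ Icc (0:ℝ) 1, 𝓑.Mem θ' (DF (a + t • h) h))
    (hsmul : ∀ t ∈ Icc (0:ℝ) 1, ∀ c : ℝ, DF (a + t • h) (c • h) = c • DF (a + t • h) h)
    (hBd : ∀ t ∈ Icc (0:ℝ) 1, 𝓑.N θ' (DF (a + t • h) h - v) ≤ Bd)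
    (hderiv : ∀ t ∈ Icc (0:ℝ) 1, ∀ ε > (0:ℝ), ∃ δ > (0:ℝ), ∀ w : 𝓑.E, 𝓑.Mem θ w →
      𝓑.N θ w < δ →
      𝓑.N θ' (F (a + t • h + w) - F (a + t • h) - DF (a + t • h) w) ≤ ε * 𝓑.N θ w) :
    𝓑.N θ' (F (a + h) - F a - v) ≤ Bd := by
  have h01 : (0:ℝ) ∈ Icc (0:ℝ) 1 := ⟨le_refl 0, zero_le_one⟩
  have hBd0 : 0 ≤ Bd := le_trans (𝓑.N_nonneg _ _) (hBd 0 h01)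
  have hm0 : 0 ≤ 𝓑.N θ h := 𝓑.N_nonneg _ _
  rcases eq_or_lt_of_le hm0 with hm0' | hmpos
  · -- degenerate case h = 0
    have hh0 : h = 0 := 𝓑.N_eq_zero θ h hMh hm0'.symm
    subst hh0
    have e0 : DF (a + (0:ℝ) • (0:𝓑.E)) ((0:ℝ) • (0:𝓑.E)) = 0 := by
      rw [hsmul 0 h01 0, zero_smul]
    simp only [smul_zero, add_zero, zero_smul] at e0
    have hb := hBd 0 h01
    simp only [smul_zero, add_zero, e0] at hb
    simpa using hb
  · set m := 𝓑.N θ h with hm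
    have key : ∀ ε > (0:ℝ), 𝓑.N θ' (F (a + h) - F a - v) ≤ Bd + ε * (1 + m) := by
      intro ε hε
      set β := Bd + ε * (1 + m) with hβ
      have hβ0 : 0 ≤ β := by
        have := mul_nonneg hε.le (by linarith : (0:ℝ) ≤ 1 + m)
        rw [hβ]; linarith
      have inc : ∀ t ∈ Icc (0:ℝ) 1, ∃ δ > (0:ℝ), ∀ t' ∈ Icc (0:ℝ) 1, |t' - t| < δ →
          𝓑.N θ' (F (a + t' • h) - F (a + t • h) - (t' - t) • v) ≤ β * |t' - t| := by
        intro t ht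
        obtain ⟨δ₀, hδ₀, hd⟩ := hderiv t ht ε hε
        refine ⟨δ₀ / m, by positivity, ?_⟩
        intro t' ht' hlt
        have hw : 𝓑.N θ ((t' - t) • h) < δ₀ := by
          rw [𝓑.N_smul]
          calc |t' - t| * m < δ₀ / m * m := mul_lt_mul_of_pos_right hlt hmpos
            _ = δ₀ := by field_simp
        have hwm : 𝓑.Mem θ ((t' - t) • h) := 𝓑.mem_smul θ _ h hMh
        have k1 := hd ((t' - t) • h) hwm hw
        have e1 : a + t • h + (t' - t) • h = a + t' • h := by
          rw [add_assoc, ← add_smul]; ring_nf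
        have e2 : DF (a + t • h) ((t' - t) • h) = (t' - t) • DF (a + t • h) h :=
          hsmul t ht (t' - t)
        rw [e1, e2] at k1
        rw [𝓑.N_smul] at k1
        have dec : F (a + t' • h) - F (a + t • h) - (t' - t) • v
            = (F (a + t' • h) - F (a + t • h) - (t' - t) • DF (a + t • h) h)
              + (t' - t) • (DF (a + t • h) h - v) := by
          rw [smul_sub]; abel
        rw [dec]
        have m1 : 𝓑.Mem θ' (F (a + t' • h) - F (a + t • h) - (t' - t) • DF (a + t • h) h) :=
          𝓑.mem_sub' θ' (𝓑.mem_sub' θ' (hMF t' ht') (hMF t ht)) (𝓑.mem_smul _ _ _ (hMDF t ht))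
        have m2 : 𝓑.Mem θ' ((t' - t) • (DF (a + t • h) h - v)) :=
          𝓑.mem_smul _ _ _ (𝓑.mem_sub' θ' (hMDF t ht) hMv)
        have tri := 𝓑.N_add θ' _ _ m1 m2
        have b2 : 𝓑.N θ' ((t' - t) • (DF (a + t • h) h - v)) ≤ |t' - t| * Bd := by
          rw [𝓑.N_smul]
          exact mul_le_mul_of_nonneg_left (hBd t ht) (abs_nonneg _)
        calc 𝓑.N θ' _ ≤ _ + _ := tri
          _ ≤ ε * (|t' - t| * m) + |t' - t| * Bd := add_le_add k1 b2
          _ ≤ β * |t' - t| := by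
              rw [hβ]
              have h1 : 0 ≤ ε * |t' - t| := mul_nonneg hε.le (abs_nonneg _)
              nlinarith [abs_nonneg (t' - t)]
      set A := {t : ℝ | t ∈ Icc (0:ℝ) 1 ∧ 𝓑.N θ' (F (a + t • h) - F a - t • v) ≤ β * t}
        with hA
      have h0A : (0:ℝ) ∈ A := by
        refine ⟨h01, ?_⟩
        simp [𝓑.N_zero]
      have hAbdd : BddAbove A := ⟨1, fun t ht => ht.1.2⟩
      have hAne : A.Nonempty := ⟨0, h0A⟩
      set K := sSup A with hK
      have hK0 : 0 ≤ K := le_csSup hAbdd h0A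
      have hK1 : K ≤ 1 := csSup_le hAne fun t ht => ht.1.2
      have hKI : K ∈ Icc (0:ℝ) 1 := ⟨hK0, hK1⟩
      obtain ⟨δ, hδ, hinc⟩ := inc K hKI
      have hKA : K ∈ A := by
        rcases eq_or_lt_of_le hK0 with h0K | h0K
        · rwa [← h0K]
        · have hmin : 0 < min δ K := lt_min hδ h0K
          have hlt : K - min δ K / 2 < K := by linarith
          obtain ⟨t, htA, htgt⟩ := exists_lt_of_lt_csSup hAne hlt
          have htK : t ≤ K := le_csSup hAbdd htA
          have habs : |t - K| < δ := by
            rw [abs_lt]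
            have h1 : min δ K ≤ δ := min_le_left _ _
            constructor <;> linarith
          have step := hinc t htA.1 habs
          refine ⟨hKI, ?_⟩
          have dec : F (a + K • h) - F a - K • v
              = -(F (a + t • h) - F (a + K • h) - (t - K) • v)
                + (F (a + t • h) - F a - t • v) := by
            rw [sub_smul]; abel
          rw [dec]
          have mt : t ∈ Icc (0:ℝ) 1 := htA.1
          have m1 : 𝓑.Mem θ' (-(F (a + t • h) - F (a + K • h) - (t - K) • v)) :=
            𝓑.mem_neg θ' _ (𝓑.mem_sub' θ' (𝓑.mem_sub' θ' (hMF t mt) (hMF K hKI))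
              (𝓑.mem_smul _ _ _ hMv))
          have hFa : 𝓑.Mem θ' (F a) := by
            have := hMF 0 h01; simpa using this
          have m2 : 𝓑.Mem θ' (F (a + t • h) - F a - t • v) :=
            𝓑.mem_sub' θ' (𝓑.mem_sub' θ' (hMF t mt) hFa) (𝓑.mem_smul θ' t v hMv)
          have tri := 𝓑.N_add θ' _ _ m1 m2
          have habs' : |t - K| = K - t := by rw [abs_of_nonpos (by linarith)]; ring
          have step' : 𝓑.N θ' (F (a + t • h) - F (a + K • h) - (t - K) • v) ≤ β * (K - t) := by
            calc 𝓑.N θ' (F (a + t • h) - F (a + K • h) - (t - K) • v) ≤ β * |t - K| := step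
              _ = β * (K - t) := by rw [habs']
          calc 𝓑.N θ' _ ≤ _ + _ := tri
            _ ≤ β * (K - t) + β * t := by
                rw [𝓑.N_neg]
                exact add_le_add step' htA.2
            _ = β * K := by ring
      have hKeq : K = 1 := by
        by_contra hne
        have hKlt : K < 1 := lt_of_le_of_ne hK1 hne
        set t' := min 1 (K + δ / 2) with ht'
        have ht'I : t' ∈ Icc (0:ℝ) 1 := ⟨le_min (by norm_num) (by linarith), min_le_left _ _⟩
        have ht'K : K < t' := lt_min hKlt (by linarith)
        have habs : |t' - K| < δ := by
          rw [abs_of_pos (by linarith)]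
          have h1 : t' ≤ K + δ / 2 := min_le_right _ _
          linarith
        have step := hinc t' ht'I habs
        have ht'A : t' ∈ A := by
          refine ⟨ht'I, ?_⟩
          have dec : F (a + t' • h) - F a - t' • v
              = (F (a + t' • h) - F (a + K • h) - (t' - K) • v)
                + (F (a + K • h) - F a - K • v) := by
            rw [sub_smul]; abel
          rw [dec]
          have m1 : 𝓑.Mem θ' (F (a + t' • h) - F (a + K • h) - (t' - K) • v) :=
            𝓑.mem_sub' θ' (𝓑.mem_sub' θ' (hMF t' ht'I) (hMF K hKI)) (𝓑.mem_smul _ _ _ hMv)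
          have hFa : 𝓑.Mem θ' (F a) := by
            have := hMF 0 h01; simpa using this
          have m2 : 𝓑.Mem θ' (F (a + K • h) - F a - K • v) :=
            𝓑.mem_sub' θ' (𝓑.mem_sub' θ' (hMF K hKI) hFa) (𝓑.mem_smul θ' K v hMv)
          have tri := 𝓑.N_add θ' _ _ m1 m2
          have habs' : |t' - K| = t' - K := abs_of_pos (by linarith)
          have step' : 𝓑.N θ' (F (a + t' • h) - F (a + K • h) - (t' - K) • v) ≤ β * (t' - K) := by
            calc 𝓑.N θ' (F (a + t' • h) - F (a + K • h) - (t' - K) • v) ≤ β * |t' - K| := step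
              _ = β * (t' - K) := by rw [habs']
          calc 𝓑.N θ' _ ≤ _ + _ := tri
            _ ≤ β * (t' - K) + β * K := by
                exact add_le_add step' hKA.2
            _ = β * t' := by ring
        have := le_csSup hAbdd ht'A
        linarith
      have h1A : (1:ℝ) ∈ A := hKeq ▸ hKA
      have hfin := h1A.2
      rw [one_smul, one_smul] at hfin
      linarith
    apply le_of_forall_pos_le_add
    intro ε hε
    have hden : 0 < 1 + m := by linarith
    have := key (ε / (1 + m)) (by positivity)
    calc 𝓑.N θ' (F (a + h) - F a - v) ≤ Bd + ε / (1 + m) * (1 + m) := this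
      _ = Bd + ε := by field_simp

/-- Mean value inequality: Lipschitz bound from a bounded derivative along the segment.
`θh` is a finer level containing the endpoints. -/
lemma mvLip (𝓑 : BanachScale) (θ θ' θh : ℝ) (hθ : θ ≤ θh) (C : ℝ) (hC : 0 ≤ C)
    (F : 𝓑.E → 𝓑.E) (DF : 𝓑.E → 𝓑.E → 𝓑.E)
    (hMF : ∀ x, 𝓑.Mem θh x → 𝓑.Mem θ' (F x))
    (hMDF : ∀ x w, 𝓑.Mem θh x → 𝓑.Mem θ w → 𝓑.Mem θ' (DF x w))
    (hsmul : ∀ x w, 𝓑.Mem θh x → 𝓑.Mem θ w → ∀ c : ℝ, DF x (c • w) = c • DF x w)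
    (hbound : ∀ x w, 𝓑.Mem θh x → 𝓑.Mem θ w → 𝓑.N θ' (DF x w) ≤ C * 𝓑.N θ w)
    (hderiv : ∀ x, 𝓑.Mem θh x → ∀ ε > (0:ℝ), ∃ δ > (0:ℝ), ∀ w : 𝓑.E, 𝓑.Mem θ w →
      𝓑.N θ w < δ → 𝓑.N θ' (F (x + w) - F x - DF x w) ≤ ε * 𝓑.N θ w)
    (a b : 𝓑.E) (ha : 𝓑.Mem θh a) (hb : 𝓑.Mem θh b) :
    𝓑.N θ' (F b - F a) ≤ C * 𝓑.N θ (b - a) := by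
  have hmemseg : ∀ t ∈ Icc (0:ℝ) 1, 𝓑.Mem θh (a + t • (b - a)) :=
    fun t _ => 𝓑.mem_add θh _ _ ha (𝓑.mem_smul θh t _ (𝓑.mem_sub' θh hb ha))
  have hmemh : 𝓑.Mem θ (b - a) := 𝓑.mem_mono hθ _ (𝓑.mem_sub' θh hb ha)
  have h := 𝓑.mv2 θ θ' F DF a (b - a) 0 (C * 𝓑.N θ (b - a)) hmemh (𝓑.mem_zero θ')
    (fun t ht => hMF _ (hmemseg t ht))
    (fun t ht => hMDF _ _ (hmemseg t ht) hmemh)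
    (fun t ht c => hsmul _ _ (hmemseg t ht) hmemh c)
    (fun t ht => by rw [sub_zero]; exact hbound _ _ (hmemseg t ht) hmemh)
    (fun t ht => hderiv _ (hmemseg t ht))
  rw [sub_zero] at h
  have e : a + (b - a) = b := by abel
  rwa [e] at h

end BanachScale

section SupHelpers

lemma scaleSupNorm_nonneg (𝓑 : BanachScale) (θ T : ℝ) (f : ℝ → 𝓑.E) :
    0 ≤ scaleSupNorm 𝓑 θ T f := by
  apply Real.sSup_nonneg
  rintro r ⟨t, _, _, rfl⟩
  exact 𝓑.N_nonneg _ _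

lemma scaleSupNorm_le (𝓑 : BanachScale) (θ T : ℝ) (f : ℝ → 𝓑.E) (B : ℝ) (hB : 0 ≤ B)
    (h : ∀ t, 0 ≤ t → t ≤ T → 𝓑.N θ (f t) ≤ B) : scaleSupNorm 𝓑 θ T f ≤ B := by
  apply Real.sSup_le _ hB
  rintro r ⟨t, h1, h2, rfl⟩
  exact h t h1 h2

lemma le_scaleSupNorm (𝓑 : BanachScale) (θ T : ℝ) (f : ℝ → 𝓑.E)
    (hbdd : BddAbove {r : ℝ | ∃ t : ℝ, 0 ≤ t ∧ t ≤ T ∧ r = 𝓑.N θ (f t)})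
    {t : ℝ} (h1 : 0 ≤ t) (h2 : t ≤ T) : 𝓑.N θ (f t) ≤ scaleSupNorm 𝓑 θ T f :=
  le_csSup hbdd ⟨t, h1, h2, rfl⟩

lemma scaleHolderNorm2_nonneg (𝓑 : BanachScale) (θ η T : ℝ) (F : ℝ → ℝ → 𝓑.E) :
    0 ≤ scaleHolderNorm2 𝓑 θ η T F := by
  apply Real.sSup_nonneg
  rintro r ⟨s, t, _, hst, _, rfl⟩
  exact div_nonneg (𝓑.N_nonneg _ _) (Real.rpow_nonneg (by linarith) _)

lemma scaleHolderNorm2_le (𝓑 : BanachScale) (θ η T : ℝ) (F : ℝ → ℝ → 𝓑.E) (B : ℝ)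
    (hB : 0 ≤ B) (h : ∀ s t, 0 ≤ s → s < t → t ≤ T → 𝓑.N θ (F s t) ≤ B * (t - s) ^ η) :
    scaleHolderNorm2 𝓑 θ η T F ≤ B := by
  apply Real.sSup_le _ hB
  rintro r ⟨s, t, h1, h2, h3, rfl⟩
  rw [div_le_iff₀ (Real.rpow_pos_of_pos (by linarith) _)]
  exact h s t h1 h2 h3

lemma holder2_bddAbove (𝓑 : BanachScale) (θ η T : ℝ) (F : ℝ → ℝ → 𝓑.E) (C : ℝ)
    (h : ∀ s t, 0 ≤ s → s < t → t ≤ T → 𝓑.N θ (F s t) ≤ C * (t - s) ^ η) :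
    BddAbove {r : ℝ | ∃ s t : ℝ, 0 ≤ s ∧ s < t ∧ t ≤ T ∧ r = 𝓑.N θ (F s t) / (t - s) ^ η} := by
  refine ⟨max C 0, ?_⟩
  rintro r ⟨s, t, h1, h2, h3, rfl⟩
  have hpos : (0:ℝ) < (t - s) ^ η := Real.rpow_pos_of_pos (by linarith) _
  rw [div_le_iff₀ hpos]
  calc 𝓑.N θ (F s t) ≤ C * (t - s) ^ η := h s t h1 h2 h3
    _ ≤ max C 0 * (t - s) ^ η := mul_le_mul_of_nonneg_right (le_max_left _ _) hpos.le

lemma le_scaleHolderNorm2 (𝓑 : BanachScale) (θ η T : ℝ) (F : ℝ → ℝ → 𝓑.E)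
    (hbdd : BddAbove {r : ℝ | ∃ s t : ℝ, 0 ≤ s ∧ s < t ∧ t ≤ T ∧
      r = 𝓑.N θ (F s t) / (t - s) ^ η})
    {s t : ℝ} (h1 : 0 ≤ s) (h2 : s < t) (h3 : t ≤ T) :
    𝓑.N θ (F s t) ≤ scaleHolderNorm2 𝓑 θ η T F * (t - s) ^ η := by
  have hpos : (0:ℝ) < (t - s) ^ η := Real.rpow_pos_of_pos (by linarith) _
  have hmem : 𝓑.N θ (F s t) / (t - s) ^ η ∈
      {r : ℝ | ∃ s t : ℝ, 0 ≤ s ∧ s < t ∧ t ≤ T ∧ r = 𝓑.N θ (F s t) / (t - s) ^ η} :=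
    ⟨s, t, h1, h2, h3, rfl⟩
  have := le_csSup hbdd hmem
  calc 𝓑.N θ (F s t) = 𝓑.N θ (F s t) / (t - s) ^ η * (t - s) ^ η := by
        field_simp
    _ ≤ scaleHolderNorm2 𝓑 θ η T F * (t - s) ^ η :=
        mul_le_mul_of_nonneg_right this hpos.le

lemma supNorm_bddAbove_of_cont (𝓑 : BanachScale) (θ T : ℝ) (f : ℝ → 𝓑.E)
    (hmem : ∀ t, 0 ≤ t → t ≤ T → 𝓑.Mem θ (f t))
    (hcont : ∀ t, 0 ≤ t → t ≤ T → ∀ ε > (0:ℝ), ∃ δ > (0:ℝ), ∀ s, 0 ≤ s → s ≤ T →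
      |s - t| < δ → 𝓑.N θ (f s - f t) < ε) :
    BddAbove {r : ℝ | ∃ t : ℝ, 0 ≤ t ∧ t ≤ T ∧ r = 𝓑.N θ (f t)} := by
  set g : ℝ → ℝ := fun t => 𝓑.N θ (f t) with hg
  have hsub : {r : ℝ | ∃ t : ℝ, 0 ≤ t ∧ t ≤ T ∧ r = 𝓑.N θ (f t)} ⊆ g '' Icc 0 T := by
    rintro r ⟨t, h1, h2, rfl⟩
    exact ⟨t, ⟨h1, h2⟩, rfl⟩
  have hcg : ContinuousOn g (Icc 0 T) := by
    rw [Metric.continuousOn_iff]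
    intro t ht ε hε
    obtain ⟨δ, hδ, hd⟩ := hcont t ht.1 ht.2 ε hε
    refine ⟨δ, hδ, fun s hs hdist => ?_⟩
    have h1 := hd s hs.1 hs.2 (by rwa [Real.dist_eq] at hdist)
    rw [Real.dist_eq]
    calc |g s - g t| ≤ 𝓑.N θ (f s - f t) :=
          𝓑.abs_N_sub_N_le θ (hmem s hs.1 hs.2) (hmem t ht.1 ht.2)
      _ < ε := h1
  exact (isCompact_Icc.bddAbove_image hcg).mono hsub

end SupHelpers
set_option maxHeartbeats 4000000 in
/-- Let `G` satisfy assumption (G) and let `(y, G(y)) ∈ D^{2α}_{X,γ}` be a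
controlled rough path whose Gubinelli derivative is `G(y)`.  Then
`(G(y), DG(y)G(y)) ∈ D^{2α}_{X,γ-σ}` and
`‖G(y), DG(y)G(y)‖_{X,2α,γ-σ} ≲ 1 + ‖y, G(y)‖_{X,2α,γ}`, the bound being linear (not
quadratic) in `‖y, G(y)‖_{X,2α,γ}`. -/
theorem statement12 (α T γ σ : ℝ) (hα : 1/3 < α) (hα' : α < 1/2) (hT : 0 < T)
    (hσ : 0 ≤ σ) (hσα : σ < α)
    (𝓑 : BanachScale) (RP : RoughPath α T)
    (G : 𝓑.E → 𝓑.E) (DG : 𝓑.E → 𝓑.E →ₗ[ℝ] 𝓑.E)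
    (D2G : 𝓑.E → 𝓑.E →ₗ[ℝ] 𝓑.E →ₗ[ℝ] 𝓑.E)
    (D3G : 𝓑.E → 𝓑.E →ₗ[ℝ] 𝓑.E →ₗ[ℝ] 𝓑.E →ₗ[ℝ] 𝓑.E)
    (hG : AssumptionG 𝓑 α σ γ G DG D2G D3G) :
    ∃ C > (0:ℝ), ∀ y : ℝ → 𝓑.E,
      IsControlledPath 𝓑 α γ T RP.X y (fun t => G (y t)) →
      IsControlledPath 𝓑 α (γ - σ) T RP.X (fun t => G (y t))
        (fun t => DG (y t) (G (y t))) ∧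
      crpNorm 𝓑 α (γ - σ) T RP.X (fun t => G (y t)) (fun t => DG (y t) (G (y t)))
        ≤ C * (1 + crpNorm 𝓑 α γ T RP.X y (fun t => G (y t))) := by
    classical
  -- membership of the index levels
  have h0m : (0:ℝ) ∈ ({0, α, 2 * α} : Set ℝ) := Set.mem_insert 0 _
  have hαm : α ∈ ({0, α, 2 * α} : Set ℝ) := Set.mem_insert_of_mem _ (Set.mem_insert α _)
  have h2αm : 2 * α ∈ ({0, α, 2 * α} : Set ℝ) :=
    Set.mem_insert_of_mem _ (Set.mem_insert_of_mem _ rfl)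
  have hαpos : 0 < α := by linarith
  have hαne : α ≠ 0 := ne_of_gt hαpos
  have h2αne : (2 * α) ≠ 0 := by positivity
  -- level inequalities
  have hle1 : γ - α ≤ γ - σ := by linarith
  have hle2 : γ - 2 * α ≤ γ - α - σ := by linarith
  have hle3 : γ - α ≤ γ := by linarith
  have hle5 : γ - 2 * α ≤ γ - σ := by linarith
  have hle7 : γ - 2 * α - σ ≤ γ - α - σ := by linarith
  have hle9 : γ - 2 * α ≤ γ := by linarith
  -- constants from the assumptions
  obtain ⟨C0', hC0'⟩ := hG.DG_bound 0 h0m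
  set C0 := max C0' 0 with hC0def
  have hC0nn : 0 ≤ C0 := le_max_right _ _
  have hC0b : ∀ x h : 𝓑.E, 𝓑.Mem γ x → 𝓑.Mem γ h →
      𝓑.N (γ - σ) (DG x h) ≤ C0 * 𝓑.N γ h := by
    intro x h hx hh
    have h1 := hC0' x h (by simpa using hx) (by simpa using hh)
    simp only [sub_zero] at h1
    exact h1.trans (mul_le_mul_of_nonneg_right (le_max_left _ _) (𝓑.N_nonneg _ _))
  obtain ⟨C1', hC1'⟩ := hG.DG_bound α hαm
  set C1 := max C1' 0 with hC1def
  have hC1nn : 0 ≤ C1 := le_max_right _ _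
  have hC1b : ∀ x h : 𝓑.E, 𝓑.Mem (γ - α) x → 𝓑.Mem (γ - α) h →
      𝓑.N (γ - α - σ) (DG x h) ≤ C1 * 𝓑.N (γ - α) h := fun x h hx hh =>
    (hC1' x h hx hh).trans (mul_le_mul_of_nonneg_right (le_max_left _ _) (𝓑.N_nonneg _ _))
  obtain ⟨C2', hC2'⟩ := hG.DG_bound (2 * α) h2αm
  set C2 := max C2' 0 with hC2def
  have hC2nn : 0 ≤ C2 := le_max_right _ _
  have hC2b : ∀ x h : 𝓑.E, 𝓑.Mem (γ - 2 * α) x → 𝓑.Mem (γ - 2 * α) h →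
      𝓑.N (γ - 2 * α - σ) (DG x h) ≤ C2 * 𝓑.N (γ - 2 * α) h := fun x h hx hh =>
    (hC2' x h hx hh).trans (mul_le_mul_of_nonneg_right (le_max_left _ _) (𝓑.N_nonneg _ _))
  obtain ⟨D2'', hD2''⟩ := hG.D2G_bound α hαm
  set D2p := max D2'' 0 with hD2def
  have hD2nn : 0 ≤ D2p := le_max_right _ _
  have hD2b : ∀ x h k : 𝓑.E, 𝓑.Mem (γ - α) x → 𝓑.Mem (γ - α) h → 𝓑.Mem (γ - α) k →
      𝓑.N (γ - α - σ) (D2G x h k) ≤ D2p * (𝓑.N (γ - α) h * 𝓑.N (γ - α) k) := by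
    intro x h k hx hh hk
    exact (hD2'' x h k hx hh hk).trans (mul_le_mul_of_nonneg_right (le_max_left _ _)
      (mul_nonneg (𝓑.N_nonneg _ _) (𝓑.N_nonneg _ _)))
  obtain ⟨L, CL', hL1, hL2⟩ := hG.DGG_deriv_bounded
  set CL := max CL' 0 with hCLdef
  have hCLnn : 0 ≤ CL := le_max_right _ _
  have hL1b : ∀ x h : 𝓑.E, 𝓑.Mem (γ - α) x → 𝓑.Mem (γ - α) h →
      𝓑.N (γ - 2 * α - σ) (L x h) ≤ CL * 𝓑.N (γ - α) h := fun x h hx hh =>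
    ((hL1 x h hx hh).2).trans (mul_le_mul_of_nonneg_right (le_max_left _ _) (𝓑.N_nonneg _ _))
  obtain ⟨CX', hCX'⟩ := RP.holderX
  set CX := max CX' 0 with hCXdef
  have hCXnn : 0 ≤ CX := le_max_right _ _
  have hCXb : ∀ s t : ℝ, 0 ≤ s → s ≤ t → t ≤ T →
      |RP.X t - RP.X s| ≤ CX * (t - s) ^ α := fun s t h1 h2 h3 =>
    (hCX' s t h1 h2 h3).trans (mul_le_mul_of_nonneg_right (le_max_left _ _)
      (Real.rpow_nonneg (by linarith) _))
  obtain ⟨ce, cepos, hce⟩ := 𝓑.embed_bound hle1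
  obtain ⟨ce2, ce2pos, hce2⟩ := 𝓑.embed_bound hle2
  obtain ⟨ce3, ce3pos, hce3⟩ := 𝓑.embed_bound hle3
  -- G membership helpers
  have hGmem : ∀ x : 𝓑.E, 𝓑.Mem γ x → 𝓑.Mem (γ - σ) (G x) := by
    intro x hx
    have := hG.maps 0 h0m x (by simpa using hx)
    simpa using this
  have hGmemα : ∀ x : 𝓑.E, 𝓑.Mem (γ - α) x → 𝓑.Mem (γ - α - σ) (G x) :=
    fun x hx => hG.maps α hαm x hx
  have hGmem2α : ∀ x : 𝓑.E, 𝓑.Mem (γ - 2 * α) x → 𝓑.Mem (γ - 2 * α - σ) (G x) :=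
    fun x hx => hG.maps (2 * α) h2αm x hx
  have hDGmapsα : ∀ x h : 𝓑.E, 𝓑.Mem (γ - α) x → 𝓑.Mem (γ - α) h →
      𝓑.Mem (γ - α - σ) (DG x h) := fun x h hx hh => hG.DG_maps α hαm x h hx hh
  have hDGmaps2α : ∀ x h : 𝓑.E, 𝓑.Mem (γ - 2 * α) x → 𝓑.Mem (γ - 2 * α) h →
      𝓑.Mem (γ - 2 * α - σ) (DG x h) := fun x h hx hh => hG.DG_maps (2 * α) h2αm x h hx hh
  -- Lipschitz bounds via the mean value inequality
  have LipG0 : ∀ a b : 𝓑.E, 𝓑.Mem γ a → 𝓑.Mem γ b →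
      𝓑.N (γ - σ) (G b - G a) ≤ C0 * 𝓑.N γ (b - a) := by
    intro a b ha hb
    refine 𝓑.mvLip γ (γ - σ) γ le_rfl C0 hC0nn G (fun x w => DG x w)
      hGmem ?_ ?_ hC0b ?_ a b ha hb
    · intro x w hx hw
      have := hG.DG_maps 0 h0m x w (by simpa using hx) (by simpa using hw)
      simpa using this
    · intro x w _ _ c
      exact (DG x).map_smul c w
    · intro x hx ε hε
      obtain ⟨δ, hδ, hd⟩ := hG.DG_isDeriv 0 h0m x (by simpa using hx) ε hε
      refine ⟨δ, hδ, fun w hw hwδ => ?_⟩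
      have := hd w (by simpa using hw) (by simpa using hwδ)
      simpa using this
  have LipGα : ∀ a b : 𝓑.E, 𝓑.Mem γ a → 𝓑.Mem γ b →
      𝓑.N (γ - α - σ) (G b - G a) ≤ C1 * 𝓑.N (γ - α) (b - a) := by
    intro a b ha hb
    refine 𝓑.mvLip (γ - α) (γ - α - σ) γ hle3 C1 hC1nn G (fun x w => DG x w)
      (fun x hx => hGmemα x (𝓑.mem_mono hle3 x hx)) ?_ ?_
      (fun x w hx hw => hC1b x w (𝓑.mem_mono hle3 x hx) hw) ?_ a b ha hb
    · exact fun x w hx hw => hDGmapsα x w (𝓑.mem_mono hle3 x hx) hw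
    · intro x w _ _ c
      exact (DG x).map_smul c w
    · exact fun x hx => hG.DG_isDeriv α hαm x (𝓑.mem_mono hle3 x hx)
  have LipH : ∀ a b : 𝓑.E, 𝓑.Mem γ a → 𝓑.Mem γ b →
      𝓑.N (γ - 2 * α - σ) (DG b (G b) - DG a (G a)) ≤ CL * 𝓑.N (γ - α) (b - a) := by
    intro a b ha hb
    refine 𝓑.mvLip (γ - α) (γ - 2 * α - σ) γ hle3 CL hCLnn
      (fun x => DG x (G x)) (fun x w => L x w) ?_ ?_ ?_ ?_ ?_ a b ha hb
    · intro x hx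
      exact 𝓑.mem_mono hle7 _ (hDGmapsα x (G x) (𝓑.mem_mono hle3 x hx)
        (𝓑.mem_mono hle1 _ (hGmem x hx)))
    · exact fun x w hx hw => (hL1 x w (𝓑.mem_mono hle3 x hx) hw).1
    · intro x w _ _ c
      exact (L x).map_smul c w
    · exact fun x w hx hw => hL1b x w (𝓑.mem_mono hle3 x hx) hw
    · exact fun x hx => hL2 x (𝓑.mem_mono hle3 x hx)
  have LipDGk : ∀ k : 𝓑.E, 𝓑.Mem (γ - α) k → ∀ a b : 𝓑.E, 𝓑.Mem γ a → 𝓑.Mem γ b →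
      𝓑.N (γ - α - σ) (DG b k - DG a k) ≤ (D2p * 𝓑.N (γ - α) k) * 𝓑.N (γ - α) (b - a) := by
    intro k hk a b ha hb
    have hk0 : 0 ≤ 𝓑.N (γ - α) k := 𝓑.N_nonneg _ _
    refine 𝓑.mvLip (γ - α) (γ - α - σ) γ hle3 (D2p * 𝓑.N (γ - α) k)
      (mul_nonneg hD2nn hk0) (fun x => DG x k) (fun x w => D2G x w k) ?_ ?_ ?_ ?_ ?_ a b ha hb
    · exact fun x hx => hDGmapsα x k (𝓑.mem_mono hle3 x hx) hk
    · exact fun x w hx hw => hG.D2G_maps α hαm x w k (𝓑.mem_mono hle3 x hx) hw hk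
    · intro x w _ _ c
      show D2G x (c • w) k = c • D2G x w k
      rw [map_smul]
      rfl
    · intro x w hx hw
      calc 𝓑.N (γ - α - σ) (D2G x w k) ≤ D2p * (𝓑.N (γ - α) w * 𝓑.N (γ - α) k) :=
            hD2b x w k (𝓑.mem_mono hle3 x hx) hw hk
        _ = (D2p * 𝓑.N (γ - α) k) * 𝓑.N (γ - α) w := by ring
    · intro x hx ε hε
      have hden : (0:ℝ) < 𝓑.N (γ - α) k + 1 := by linarith
      obtain ⟨δ, hδ, hd⟩ := hG.D2G_isDeriv α hαm x (𝓑.mem_mono hle3 x hx)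
        (ε / (𝓑.N (γ - α) k + 1)) (by positivity)
      refine ⟨δ, hδ, fun w hw hwδ => ?_⟩
      have h2 := hd w hw hwδ k hk
      have hw0 : 0 ≤ 𝓑.N (γ - α) w := 𝓑.N_nonneg _ _
      calc 𝓑.N (γ - α - σ) (DG (x + w) k - DG x k - D2G x w k)
          ≤ ε / (𝓑.N (γ - α) k + 1) * (𝓑.N (γ - α) w * 𝓑.N (γ - α) k) := h2
        _ ≤ ε * 𝓑.N (γ - α) w := by
            rw [div_mul_eq_mul_div, div_le_iff₀ hden]
            have h1 : 0 ≤ ε * 𝓑.N (γ - α) w := mul_nonneg hε.le hw0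
            nlinarith
  -- the global constant
  set K1 := 𝓑.N (γ - σ) (G 0) with hK1def
  have hK1nn : 0 ≤ K1 := 𝓑.N_nonneg _ _
  set P := K1 + C0 with hPdef
  have hPnn : 0 ≤ P := add_nonneg hK1nn hC0nn
  set QK := 1 + CX * ce * P with hQKdef
  have hQKnn : 0 ≤ QK := by
    have := mul_nonneg (mul_nonneg hCXnn cepos.le) hPnn
    linarith
  set Cfin := P + C1 * ce * P + CL * QK + (C1 * QK + CX * (C1 * (ce * P)))
      + (C2 + CX * CL * QK + CX * C2 * ce2 * C1 * QK) + 1 with hCfin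
  have ht1 : 0 ≤ C1 * ce * P := mul_nonneg (mul_nonneg hC1nn cepos.le) hPnn
  have ht2 : 0 ≤ CL * QK := mul_nonneg hCLnn hQKnn
  have ht3 : 0 ≤ C1 * QK := mul_nonneg hC1nn hQKnn
  have ht4 : 0 ≤ CX * (C1 * (ce * P)) :=
    mul_nonneg hCXnn (mul_nonneg hC1nn (mul_nonneg cepos.le hPnn))
  have ht5 : 0 ≤ CX * CL * QK := mul_nonneg (mul_nonneg hCXnn hCLnn) hQKnn
  have ht6 : 0 ≤ CX * C2 * ce2 * C1 * QK :=
    mul_nonneg (mul_nonneg (mul_nonneg (mul_nonneg hCXnn hC2nn) ce2pos.le) hC1nn) hQKnn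
  have hCpos : 0 < Cfin := by rw [hCfin]; linarith
  refine ⟨Cfin, hCpos, ?_⟩
  intro y hy
  -- per-path facts
  have memy : ∀ t : ℝ, 0 ≤ t → t ≤ T → 𝓑.Mem γ (y t) := hy.mem_y
  have memyα : ∀ t : ℝ, 0 ≤ t → t ≤ T → 𝓑.Mem (γ - α) (y t) :=
    fun t h1 h2 => 𝓑.mem_mono hle3 _ (memy t h1 h2)
  have memGσ : ∀ t : ℝ, 0 ≤ t → t ≤ T → 𝓑.Mem (γ - σ) (G (y t)) :=
    fun t h1 h2 => hGmem _ (memy t h1 h2)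
  have memGα : ∀ t : ℝ, 0 ≤ t → t ≤ T → 𝓑.Mem (γ - α) (G (y t)) :=
    fun t h1 h2 => 𝓑.mem_mono hle1 _ (memGσ t h1 h2)
  have memH : ∀ t : ℝ, 0 ≤ t → t ≤ T → 𝓑.Mem (γ - α - σ) (DG (y t) (G (y t))) :=
    fun t h1 h2 => hDGmapsα _ _ (memyα t h1 h2) (memGα t h1 h2)
  have memHlow : ∀ t : ℝ, 0 ≤ t → t ≤ T → 𝓑.Mem (γ - 2 * α - σ) (DG (y t) (G (y t))) :=
    fun t h1 h2 => 𝓑.mem_mono hle7 _ (memH t h1 h2)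
  -- components of the controlled norm of y
  set M := scaleSupNorm 𝓑 γ T y with hMdef
  set S2 := scaleSupNorm 𝓑 (γ - α) T (fun t => G (y t)) with hS2def
  set S3 := scaleHolderNorm 𝓑 (γ - 2 * α) α T (fun t => G (y t)) with hS3def
  set Rα := scaleHolderNorm2 𝓑 (γ - α) α T
    (gubRemainder 𝓑 RP.X y fun t => G (y t)) with hRαdef
  set R2 := scaleHolderNorm2 𝓑 (γ - 2 * α) (2 * α) T
    (gubRemainder 𝓑 RP.X y fun t => G (y t)) with hR2def
  have hdecomp : crpNorm 𝓑 α γ T RP.X y (fun t => G (y t)) = M + S2 + S3 + Rα + R2 := rfl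
  set crp := crpNorm 𝓑 α γ T RP.X y (fun t => G (y t)) with hcrpdef
  have hMnn : 0 ≤ M := scaleSupNorm_nonneg 𝓑 γ T y
  have hS2nn : 0 ≤ S2 := scaleSupNorm_nonneg 𝓑 (γ - α) T _
  have hS3nn : 0 ≤ S3 := scaleHolderNorm2_nonneg 𝓑 (γ - 2 * α) α T _
  have hRαnn : 0 ≤ Rα := scaleHolderNorm2_nonneg 𝓑 (γ - α) α T _
  have hR2nn : 0 ≤ R2 := scaleHolderNorm2_nonneg 𝓑 (γ - 2 * α) (2 * α) T _
  have hcrpnn : 0 ≤ crp := by rw [hdecomp]; linarith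
  have hMcrp : M ≤ crp := by rw [hdecomp]; linarith
  have hRαcrp : Rα ≤ crp := by rw [hdecomp]; linarith
  have hR2crp : R2 ≤ crp := by rw [hdecomp]; linarith
  -- pointwise bounds from the components
  have hMbdd := supNorm_bddAbove_of_cont 𝓑 γ T y memy hy.cont_y
  have hMle : ∀ t : ℝ, 0 ≤ t → t ≤ T → 𝓑.N γ (y t) ≤ M :=
    fun t h1 h2 => le_scaleSupNorm 𝓑 γ T y hMbdd h1 h2
  obtain ⟨Cra, hCra⟩ := hy.rem_alpha
  have hRαbdd := holder2_bddAbove 𝓑 (γ - α) α T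
    (gubRemainder 𝓑 RP.X y fun t => G (y t)) Cra (fun s t h1 h2 h3 => hCra s t h1 h2.le h3)
  obtain ⟨Cr2, hCr2⟩ := hy.rem_two_alpha
  have hR2bdd := holder2_bddAbove 𝓑 (γ - 2 * α) (2 * α) T
    (gubRemainder 𝓑 RP.X y fun t => G (y t)) Cr2 (fun s t h1 h2 h3 => hCr2 s t h1 h2.le h3)
  have hgub0 : ∀ s : ℝ, gubRemainder 𝓑 RP.X y (fun t => G (y t)) s s = 0 := by
    intro s
    simp [gubRemainder]
  have hRyle : ∀ s t : ℝ, 0 ≤ s → s ≤ t → t ≤ T →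
      𝓑.N (γ - α) (gubRemainder 𝓑 RP.X y (fun u => G (y u)) s t) ≤ Rα * (t - s) ^ α := by
    intro s t h1 h2 h3
    rcases eq_or_lt_of_le h2 with rfl | hlt
    · rw [hgub0 s, 𝓑.N_zero, sub_self, Real.zero_rpow hαne, mul_zero]
    · exact le_scaleHolderNorm2 𝓑 (γ - α) α T _ hRαbdd h1 hlt h3
  have hRy2le : ∀ s t : ℝ, 0 ≤ s → s ≤ t → t ≤ T →
      𝓑.N (γ - 2 * α) (gubRemainder 𝓑 RP.X y (fun u => G (y u)) s t)
        ≤ R2 * (t - s) ^ (2 * α) := by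
    intro s t h1 h2 h3
    rcases eq_or_lt_of_le h2 with rfl | hlt
    · rw [hgub0 s, 𝓑.N_zero, sub_self, Real.zero_rpow h2αne, mul_zero]
    · exact le_scaleHolderNorm2 𝓑 (γ - 2 * α) (2 * α) T _ hR2bdd h1 hlt h3
  have memRyα : ∀ s t : ℝ, 0 ≤ s → s ≤ t → t ≤ T →
      𝓑.Mem (γ - α) (gubRemainder 𝓑 RP.X y (fun u => G (y u)) s t) := by
    intro s t h1 h2 h3
    exact 𝓑.mem_sub' _ (𝓑.mem_sub' _ (memyα t (h1.trans h2) h3) (memyα s h1 (h2.trans h3)))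
      (𝓑.mem_smul _ _ _ (memGα s h1 (h2.trans h3)))
  have memRy2α : ∀ s t : ℝ, 0 ≤ s → s ≤ t → t ≤ T →
      𝓑.Mem (γ - 2 * α) (gubRemainder 𝓑 RP.X y (fun u => G (y u)) s t) := by
    intro s t h1 h2 h3
    exact 𝓑.mem_sub' _ (𝓑.mem_sub' _ (𝓑.mem_mono hle9 _ (memy t (h1.trans h2) h3))
      (𝓑.mem_mono hle9 _ (memy s h1 (h2.trans h3))))
      (𝓑.mem_smul _ _ _ (𝓑.mem_mono hle5 _ (memGσ s h1 (h2.trans h3))))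
  -- sup bounds on G ∘ y and DG(y)G(y)
  have hNGσ : ∀ t : ℝ, 0 ≤ t → t ≤ T → 𝓑.N (γ - σ) (G (y t)) ≤ K1 + C0 * M := by
    intro t h1 h2
    have hG0 : 𝓑.Mem (γ - σ) (G 0) := hGmem 0 (𝓑.mem_zero γ)
    have e : G (y t) = (G (y t) - G 0) + G 0 := by abel
    have m1 : 𝓑.Mem (γ - σ) (G (y t) - G 0) := 𝓑.mem_sub' _ (memGσ t h1 h2) hG0
    calc 𝓑.N (γ - σ) (G (y t)) = 𝓑.N (γ - σ) ((G (y t) - G 0) + G 0) := by rw [← e]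
      _ ≤ 𝓑.N (γ - σ) (G (y t) - G 0) + 𝓑.N (γ - σ) (G 0) := 𝓑.N_add _ _ _ m1 hG0
      _ ≤ C0 * 𝓑.N γ (y t - 0) + K1 :=
          add_le_add_left (LipG0 0 (y t) (𝓑.mem_zero γ) (memy t h1 h2)) _
      _ = C0 * 𝓑.N γ (y t) + K1 := by rw [sub_zero]
      _ ≤ C0 * M + K1 := add_le_add_left (mul_le_mul_of_nonneg_left (hMle t h1 h2) hC0nn) _
      _ = K1 + C0 * M := by ring
  have hNGα : ∀ t : ℝ, 0 ≤ t → t ≤ T →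
      𝓑.N (γ - α) (G (y t)) ≤ ce * (K1 + C0 * M) := by
    intro t h1 h2
    exact (hce _ (memGσ t h1 h2)).trans (mul_le_mul_of_nonneg_left (hNGσ t h1 h2) cepos.le)
  have hNH : ∀ t : ℝ, 0 ≤ t → t ≤ T →
      𝓑.N (γ - α - σ) (DG (y t) (G (y t))) ≤ C1 * (ce * (K1 + C0 * M)) := by
    intro t h1 h2
    exact (hC1b (y t) (G (y t)) (memyα t h1 h2) (memGα t h1 h2)).trans
      (mul_le_mul_of_nonneg_left (hNGα t h1 h2) hC1nn)
  set Kst := Rα + CX * (ce * (K1 + C0 * M)) with hKstdef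
  have hMGnn : 0 ≤ K1 + C0 * M := add_nonneg hK1nn (mul_nonneg hC0nn hMnn)
  have hKstnn : 0 ≤ Kst :=
    add_nonneg hRαnn (mul_nonneg hCXnn (mul_nonneg cepos.le hMGnn))
  -- increment bound for y in B (γ - α)
  have hδy : ∀ s t : ℝ, 0 ≤ s → s ≤ t → t ≤ T →
      𝓑.N (γ - α) (y t - y s) ≤ Kst * (t - s) ^ α := by
    intro s t h1 h2 h3
    have hu0 : (0:ℝ) ≤ (t - s) ^ α := Real.rpow_nonneg (by linarith) _
    have e : y t - y s = gubRemainder 𝓑 RP.X y (fun u => G (y u)) s t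
        + (RP.X t - RP.X s) • G (y s) := by
      simp only [gubRemainder]
      abel
    have m1 := memRyα s t h1 h2 h3
    have m2 : 𝓑.Mem (γ - α) ((RP.X t - RP.X s) • G (y s)) :=
      𝓑.mem_smul _ _ _ (memGα s h1 (h2.trans h3))
    calc 𝓑.N (γ - α) (y t - y s)
        = 𝓑.N (γ - α) (gubRemainder 𝓑 RP.X y (fun u => G (y u)) s t
            + (RP.X t - RP.X s) • G (y s)) := by rw [← e]
      _ ≤ 𝓑.N (γ - α) (gubRemainder 𝓑 RP.X y (fun u => G (y u)) s t)
            + 𝓑.N (γ - α) ((RP.X t - RP.X s) • G (y s)) := 𝓑.N_add _ _ _ m1 m2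
      _ ≤ Rα * (t - s) ^ α + |RP.X t - RP.X s| * 𝓑.N (γ - α) (G (y s)) := by
          refine add_le_add (hRyle s t h1 h2 h3) ?_
          rw [𝓑.N_smul]
      _ ≤ Rα * (t - s) ^ α + (CX * (t - s) ^ α) * (ce * (K1 + C0 * M)) := by
          refine add_le_add_right ?_ _
          exact mul_le_mul (hCXb s t h1 h2 h3) (hNGα s h1 (h2.trans h3)) (𝓑.N_nonneg _ _)
            (mul_nonneg hCXnn hu0)
      _ = Kst * (t - s) ^ α := by rw [hKstdef]; ring
  -- the key 2α-estimate for the new remainder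
  have key : ∀ s t : ℝ, 0 ≤ s → s ≤ t → t ≤ T →
      𝓑.N (γ - 2 * α - σ) (G (y t) - G (y s)
          - (RP.X t - RP.X s) • DG (y s) (G (y s)))
        ≤ (C2 * R2 + CX * CL * Kst + CX * C2 * ce2 * C1 * Kst) * (t - s) ^ (2 * α) := by
    intro s t h1 h2 h3
    rcases eq_or_lt_of_le h2 with rfl | hlt
    · have e : G (y s) - G (y s) - (RP.X s - RP.X s) • DG (y s) (G (y s)) = 0 := by simp
      rw [e, 𝓑.N_zero, sub_self, Real.zero_rpow h2αne, mul_zero]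
    · have ht0 : 0 ≤ t := h1.trans hlt.le
      have hsT : s ≤ T := hlt.le.trans h3
      have hu : 0 < t - s := sub_pos.2 hlt
      have hupos : (0:ℝ) < (t - s) ^ α := Real.rpow_pos_of_pos hu α
      have huexp : (t - s) ^ α * (t - s) ^ α = (t - s) ^ (2 * α) := by
        rw [← Real.rpow_add hu, two_mul]
      have memaa : 𝓑.Mem γ (y s) := memy s h1 hsT
      have membb : 𝓑.Mem γ (y t) := memy t ht0 h3
      have memhhγ : 𝓑.Mem γ (y t - y s) := 𝓑.mem_sub' _ membb memaa
      have hseg : ∀ r ∈ Icc (0:ℝ) 1, 𝓑.Mem γ (y s + r • (y t - y s)) :=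
        fun r _ => 𝓑.mem_add _ _ _ memaa (𝓑.mem_smul _ _ _ memhhγ)
      have hNhh : 𝓑.N (γ - α) (y t - y s) ≤ Kst * (t - s) ^ α := hδy s t h1 hlt.le h3
      have hXb : |RP.X t - RP.X s| ≤ CX * (t - s) ^ α := hCXb s t h1 hlt.le h3
      have hXnn : 0 ≤ |RP.X t - RP.X s| := abs_nonneg _
      -- bound along the segment
      have hBd : ∀ r ∈ Icc (0:ℝ) 1,
          𝓑.N (γ - 2 * α - σ) (DG (y s + r • (y t - y s)) (y t - y s)
            - (RP.X t - RP.X s) • DG (y s) (G (y s)))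
          ≤ (C2 * R2 + CX * CL * Kst + CX * C2 * ce2 * C1 * Kst) * (t - s) ^ (2 * α) := by
        intro r hr
        set x := y s + r • (y t - y s) with hxdef
        have memxγ : 𝓑.Mem γ x := hseg r hr
        have memxα : 𝓑.Mem (γ - α) x := 𝓑.mem_mono hle3 _ memxγ
        have memx2α : 𝓑.Mem (γ - 2 * α) x := 𝓑.mem_mono hle9 _ memxγ
        have memGx : 𝓑.Mem (γ - σ) (G x) := hGmem x memxγ
        have memGxα : 𝓑.Mem (γ - α) (G x) := 𝓑.mem_mono hle1 _ memGx
        have ex : x - y s = r • (y t - y s) := by rw [hxdef]; abel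
        have hex : 𝓑.N (γ - α) (x - y s) ≤ Kst * (t - s) ^ α := by
          rw [ex, 𝓑.N_smul, abs_of_nonneg hr.1]
          calc r * 𝓑.N (γ - α) (y t - y s) ≤ 1 * (Kst * (t - s) ^ α) :=
              mul_le_mul hr.2 hNhh (𝓑.N_nonneg _ _) zero_le_one
            _ = Kst * (t - s) ^ α := one_mul _
        have ehh : y t - y s = gubRemainder 𝓑 RP.X y (fun u => G (y u)) s t
            + (RP.X t - RP.X s) • G (y s) := by
          simp only [gubRemainder]
          abel
        have hid : DG x (y t - y s) - (RP.X t - RP.X s) • DG (y s) (G (y s))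
            = DG x (gubRemainder 𝓑 RP.X y (fun u => G (y u)) s t)
              + (RP.X t - RP.X s) • (DG x (G x) - DG (y s) (G (y s)))
              + (RP.X t - RP.X s) • (DG x (G (y s) - G x)) := by
          rw [ehh, map_add, map_smul, map_sub]
          rw [smul_sub, smul_sub]
          abel
        rw [hid]
        have m1 : 𝓑.Mem (γ - 2 * α - σ)
            (DG x (gubRemainder 𝓑 RP.X y (fun u => G (y u)) s t)) :=
          hDGmaps2α x _ memx2α (memRy2α s t h1 hlt.le h3)
        have m2 : 𝓑.Mem (γ - 2 * α - σ)
            ((RP.X t - RP.X s) • (DG x (G x) - DG (y s) (G (y s)))) :=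
          𝓑.mem_smul _ _ _ (𝓑.mem_sub' _ (𝓑.mem_mono hle7 _ (hDGmapsα x (G x) memxα memGxα))
            (memHlow s h1 hsT))
        have m3 : 𝓑.Mem (γ - 2 * α - σ) ((RP.X t - RP.X s) • DG x (G (y s) - G x)) :=
          𝓑.mem_smul _ _ _ (hDGmaps2α x _ memx2α
            (𝓑.mem_sub' _ (𝓑.mem_mono hle5 _ (memGσ s h1 hsT)) (𝓑.mem_mono hle5 _ memGx)))
        have b1 : 𝓑.N (γ - 2 * α - σ)
            (DG x (gubRemainder 𝓑 RP.X y (fun u => G (y u)) s t))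
            ≤ C2 * (R2 * (t - s) ^ (2 * α)) := by
          calc 𝓑.N (γ - 2 * α - σ) (DG x (gubRemainder 𝓑 RP.X y (fun u => G (y u)) s t))
              ≤ C2 * 𝓑.N (γ - 2 * α) (gubRemainder 𝓑 RP.X y (fun u => G (y u)) s t) :=
                hC2b x _ memx2α (memRy2α s t h1 hlt.le h3)
            _ ≤ C2 * (R2 * (t - s) ^ (2 * α)) :=
                mul_le_mul_of_nonneg_left (hRy2le s t h1 hlt.le h3) hC2nn
        have b2 : 𝓑.N (γ - 2 * α - σ)
            ((RP.X t - RP.X s) • (DG x (G x) - DG (y s) (G (y s))))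
            ≤ CX * CL * Kst * ((t - s) ^ α * (t - s) ^ α) := by
          rw [𝓑.N_smul]
          have hd : 𝓑.N (γ - 2 * α - σ) (DG x (G x) - DG (y s) (G (y s)))
              ≤ CL * (Kst * (t - s) ^ α) := by
            calc 𝓑.N (γ - 2 * α - σ) (DG x (G x) - DG (y s) (G (y s)))
                ≤ CL * 𝓑.N (γ - α) (x - y s) := LipH (y s) x memaa memxγ
              _ ≤ CL * (Kst * (t - s) ^ α) := mul_le_mul_of_nonneg_left hex hCLnn
          calc |RP.X t - RP.X s| * 𝓑.N (γ - 2 * α - σ) (DG x (G x) - DG (y s) (G (y s)))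
              ≤ (CX * (t - s) ^ α) * (CL * (Kst * (t - s) ^ α)) :=
                mul_le_mul hXb hd (𝓑.N_nonneg _ _) (mul_nonneg hCXnn hupos.le)
            _ = CX * CL * Kst * ((t - s) ^ α * (t - s) ^ α) := by ring
        have b3 : 𝓑.N (γ - 2 * α - σ) ((RP.X t - RP.X s) • DG x (G (y s) - G x))
            ≤ CX * C2 * ce2 * C1 * Kst * ((t - s) ^ α * (t - s) ^ α) := by
          rw [𝓑.N_smul]
          have hGd : 𝓑.N (γ - α - σ) (G (y s) - G x) ≤ C1 * (Kst * (t - s) ^ α) := by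
            calc 𝓑.N (γ - α - σ) (G (y s) - G x) ≤ C1 * 𝓑.N (γ - α) (y s - x) :=
                LipGα x (y s) memxγ memaa
              _ = C1 * 𝓑.N (γ - α) (x - y s) := by rw [𝓑.N_sub_rev]
              _ ≤ C1 * (Kst * (t - s) ^ α) := mul_le_mul_of_nonneg_left hex hC1nn
          have hd : 𝓑.N (γ - 2 * α - σ) (DG x (G (y s) - G x))
              ≤ C2 * (ce2 * (C1 * (Kst * (t - s) ^ α))) := by
            have mm : 𝓑.Mem (γ - 2 * α) (G (y s) - G x) :=
              𝓑.mem_sub' _ (𝓑.mem_mono hle5 _ (memGσ s h1 hsT)) (𝓑.mem_mono hle5 _ memGx)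
            have mm' : 𝓑.Mem (γ - α - σ) (G (y s) - G x) :=
              𝓑.mem_sub' _ (𝓑.mem_mono (by linarith : γ - α - σ ≤ γ - σ) _ (memGσ s h1 hsT))
                (hGmemα x memxα)
            calc 𝓑.N (γ - 2 * α - σ) (DG x (G (y s) - G x))
                ≤ C2 * 𝓑.N (γ - 2 * α) (G (y s) - G x) := hC2b x _ memx2α mm
              _ ≤ C2 * (ce2 * 𝓑.N (γ - α - σ) (G (y s) - G x)) :=
                  mul_le_mul_of_nonneg_left (hce2 _ mm') hC2nn
              _ ≤ C2 * (ce2 * (C1 * (Kst * (t - s) ^ α))) :=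
                  mul_le_mul_of_nonneg_left
                    (mul_le_mul_of_nonneg_left hGd ce2pos.le) hC2nn
          calc |RP.X t - RP.X s| * 𝓑.N (γ - 2 * α - σ) (DG x (G (y s) - G x))
              ≤ (CX * (t - s) ^ α) * (C2 * (ce2 * (C1 * (Kst * (t - s) ^ α)))) :=
                mul_le_mul hXb hd (𝓑.N_nonneg _ _) (mul_nonneg hCXnn hupos.le)
            _ = CX * C2 * ce2 * C1 * Kst * ((t - s) ^ α * (t - s) ^ α) := by ring
        refine le_trans (𝓑.N_add _ _ _ (𝓑.mem_add _ _ _ m1 m2) m3) ?_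
        refine le_trans (add_le_add_left (𝓑.N_add _ _ _ m1 m2) _) ?_
        refine le_trans (add_le_add (add_le_add b1 b2) b3) (le_of_eq ?_)
        rw [huexp]
        ring
      have main := 𝓑.mv2 (γ - 2 * α) (γ - 2 * α - σ) G (fun x w => DG x w)
        (y s) (y t - y s) ((RP.X t - RP.X s) • DG (y s) (G (y s)))
        ((C2 * R2 + CX * CL * Kst + CX * C2 * ce2 * C1 * Kst) * (t - s) ^ (2 * α))
        (𝓑.mem_mono hle9 _ memhhγ)
        (𝓑.mem_smul _ _ _ (memHlow s h1 hsT))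
        (fun r hr => hGmem2α _ (𝓑.mem_mono hle9 _ (hseg r hr)))
        (fun r hr => hDGmaps2α _ _ (𝓑.mem_mono hle9 _ (hseg r hr))
          (𝓑.mem_mono hle9 _ memhhγ))
        (fun r _ c => (DG _).map_smul c _)
        hBd
        (fun r hr => hG.DG_isDeriv (2 * α) h2αm _ (𝓑.mem_mono hle9 _ (hseg r hr)))
      have e : y s + (y t - y s) = y t := by abel
      rwa [e] at main
  -- α-Hölder bound for the new Gubinelli derivative
  have hHy : ∀ s t : ℝ, 0 ≤ s → s ≤ t → t ≤ T →
      𝓑.N (γ - 2 * α - σ) (DG (y t) (G (y t)) - DG (y s) (G (y s)))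
        ≤ CL * Kst * (t - s) ^ α := by
    intro s t h1 h2 h3
    calc 𝓑.N (γ - 2 * α - σ) (DG (y t) (G (y t)) - DG (y s) (G (y s)))
        ≤ CL * 𝓑.N (γ - α) (y t - y s) :=
          LipH (y s) (y t) (memy s h1 (h2.trans h3)) (memy t (h1.trans h2) h3)
      _ ≤ CL * (Kst * (t - s) ^ α) := mul_le_mul_of_nonneg_left (hδy s t h1 h2 h3) hCLnn
      _ = CL * Kst * (t - s) ^ α := by ring
  -- α-Hölder bound for the new remainder
  have hRz : ∀ s t : ℝ, 0 ≤ s → s ≤ t → t ≤ T →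
      𝓑.N (γ - α - σ) (G (y t) - G (y s) - (RP.X t - RP.X s) • DG (y s) (G (y s)))
        ≤ (C1 * Kst + CX * (C1 * (ce * (K1 + C0 * M)))) * (t - s) ^ α := by
    intro s t h1 h2 h3
    have ht0 : 0 ≤ t := h1.trans h2
    have hsT : s ≤ T := h2.trans h3
    have hu0 : (0:ℝ) ≤ (t - s) ^ α := Real.rpow_nonneg (by linarith) _
    have m1 : 𝓑.Mem (γ - α - σ) (G (y t) - G (y s)) :=
      𝓑.mem_sub' _ (𝓑.mem_mono (by linarith : γ - α - σ ≤ γ - σ) _ (memGσ t ht0 h3))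
        (𝓑.mem_mono (by linarith : γ - α - σ ≤ γ - σ) _ (memGσ s h1 hsT))
    have m2 : 𝓑.Mem (γ - α - σ) ((RP.X t - RP.X s) • DG (y s) (G (y s))) :=
      𝓑.mem_smul _ _ _ (memH s h1 hsT)
    calc 𝓑.N (γ - α - σ) (G (y t) - G (y s) - (RP.X t - RP.X s) • DG (y s) (G (y s)))
        ≤ 𝓑.N (γ - α - σ) (G (y t) - G (y s))
          + 𝓑.N (γ - α - σ) ((RP.X t - RP.X s) • DG (y s) (G (y s))) :=
          𝓑.N_sub_le' _ m1 m2
      _ ≤ C1 * (Kst * (t - s) ^ α)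
          + (CX * (t - s) ^ α) * (C1 * (ce * (K1 + C0 * M))) := by
          refine add_le_add ?_ ?_
          · calc 𝓑.N (γ - α - σ) (G (y t) - G (y s))
                ≤ C1 * 𝓑.N (γ - α) (y t - y s) :=
                  LipGα (y s) (y t) (memy s h1 hsT) (memy t ht0 h3)
              _ ≤ C1 * (Kst * (t - s) ^ α) :=
                  mul_le_mul_of_nonneg_left (hδy s t h1 h2 h3) hC1nn
          · rw [𝓑.N_smul]
            exact mul_le_mul (hCXb s t h1 h2 h3) (hNH s h1 hsT) (𝓑.N_nonneg _ _)
              (mul_nonneg hCXnn hu0)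
      _ = (C1 * Kst + CX * (C1 * (ce * (K1 + C0 * M)))) * (t - s) ^ α := by ring
  -- level identities
  have e1 : γ - σ - α = γ - α - σ := by ring
  have e2 : γ - σ - 2 * α = γ - 2 * α - σ := by ring
  constructor
  · -- the controlled-path structure
    refine ⟨?_, ?_, ?_, ?_, ?_, ?_, ?_⟩
    · exact fun t h1 h2 => memGσ t h1 h2
    · intro t h1 h2
      rw [e1]
      exact memH t h1 h2
    · intro t h1 h2 ε hε
      obtain ⟨δ, hδ, hd⟩ := hy.cont_y t h1 h2 (ε / (C0 + 1)) (by positivity)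
      refine ⟨δ, hδ, fun s hs1 hs2 hlt => ?_⟩
      have hds := hd s hs1 hs2 hlt
      calc 𝓑.N (γ - σ) (G (y s) - G (y t)) ≤ C0 * 𝓑.N γ (y s - y t) :=
            LipG0 (y t) (y s) (memy t h1 h2) (memy s hs1 hs2)
        _ ≤ C0 * (ε / (C0 + 1)) := mul_le_mul_of_nonneg_left hds.le hC0nn
        _ < ε := by
            rw [mul_div_assoc']
            rw [div_lt_iff₀ (by linarith : (0:ℝ) < C0 + 1)]
            rw [mul_comm]
            exact mul_lt_mul_of_pos_left (lt_add_one C0) hε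
    · intro t h1 h2 ε hε
      set Kt := C1 * (ce * C0) + D2p * 𝓑.N (γ - α) (G (y t)) * ce3 with hKtdef
      have hKt0 : 0 ≤ Kt := add_nonneg (mul_nonneg hC1nn (mul_nonneg cepos.le hC0nn))
        (mul_nonneg (mul_nonneg hD2nn (𝓑.N_nonneg _ _)) ce3pos.le)
      obtain ⟨δ, hδ, hd⟩ := hy.cont_y t h1 h2 (ε / (Kt + 1)) (div_pos hε (by linarith))
      refine ⟨δ, hδ, fun s hs1 hs2 hlt => ?_⟩
      have hds := hd s hs1 hs2 hlt
      rw [e1]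
      have hidc : DG (y s) (G (y s)) - DG (y t) (G (y t))
          = DG (y s) (G (y s) - G (y t))
            + (DG (y s) (G (y t)) - DG (y t) (G (y t))) := by
        rw [map_sub]; abel
      rw [hidc]
      have m1 : 𝓑.Mem (γ - α - σ) (DG (y s) (G (y s) - G (y t))) :=
        hDGmapsα _ _ (memyα s hs1 hs2) (𝓑.mem_sub' _ (memGα s hs1 hs2) (memGα t h1 h2))
      have m2 : 𝓑.Mem (γ - α - σ) (DG (y s) (G (y t)) - DG (y t) (G (y t))) :=
        𝓑.mem_sub' _ (hDGmapsα _ _ (memyα s hs1 hs2) (memGα t h1 h2)) (memH t h1 h2)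
      have b1 : 𝓑.N (γ - α - σ) (DG (y s) (G (y s) - G (y t)))
          ≤ C1 * (ce * C0) * 𝓑.N γ (y s - y t) := by
        calc 𝓑.N (γ - α - σ) (DG (y s) (G (y s) - G (y t)))
            ≤ C1 * 𝓑.N (γ - α) (G (y s) - G (y t)) :=
              hC1b _ _ (memyα s hs1 hs2) (𝓑.mem_sub' _ (memGα s hs1 hs2) (memGα t h1 h2))
          _ ≤ C1 * (ce * 𝓑.N (γ - σ) (G (y s) - G (y t))) :=
              mul_le_mul_of_nonneg_left
                (hce _ (𝓑.mem_sub' _ (memGσ s hs1 hs2) (memGσ t h1 h2))) hC1nn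
          _ ≤ C1 * (ce * (C0 * 𝓑.N γ (y s - y t))) :=
              mul_le_mul_of_nonneg_left (mul_le_mul_of_nonneg_left
                (LipG0 (y t) (y s) (memy t h1 h2) (memy s hs1 hs2)) cepos.le) hC1nn
          _ = C1 * (ce * C0) * 𝓑.N γ (y s - y t) := by ring
      have b2 : 𝓑.N (γ - α - σ) (DG (y s) (G (y t)) - DG (y t) (G (y t)))
          ≤ D2p * 𝓑.N (γ - α) (G (y t)) * ce3 * 𝓑.N γ (y s - y t) := by
        calc 𝓑.N (γ - α - σ) (DG (y s) (G (y t)) - DG (y t) (G (y t)))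
            ≤ (D2p * 𝓑.N (γ - α) (G (y t))) * 𝓑.N (γ - α) (y s - y t) :=
              LipDGk (G (y t)) (memGα t h1 h2) (y t) (y s) (memy t h1 h2) (memy s hs1 hs2)
          _ ≤ (D2p * 𝓑.N (γ - α) (G (y t))) * (ce3 * 𝓑.N γ (y s - y t)) :=
              mul_le_mul_of_nonneg_left
                (hce3 _ (𝓑.mem_sub' _ (memy s hs1 hs2) (memy t h1 h2)))
                (mul_nonneg hD2nn (𝓑.N_nonneg _ _))
          _ = D2p * 𝓑.N (γ - α) (G (y t)) * ce3 * 𝓑.N γ (y s - y t) := by ring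
      calc 𝓑.N (γ - α - σ) (DG (y s) (G (y s) - G (y t))
            + (DG (y s) (G (y t)) - DG (y t) (G (y t))))
          ≤ 𝓑.N (γ - α - σ) (DG (y s) (G (y s) - G (y t)))
            + 𝓑.N (γ - α - σ) (DG (y s) (G (y t)) - DG (y t) (G (y t))) :=
            𝓑.N_add _ _ _ m1 m2
        _ ≤ C1 * (ce * C0) * 𝓑.N γ (y s - y t)
            + D2p * 𝓑.N (γ - α) (G (y t)) * ce3 * 𝓑.N γ (y s - y t) := add_le_add b1 b2
        _ = Kt * 𝓑.N γ (y s - y t) := by rw [hKtdef]; ring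
        _ ≤ Kt * (ε / (Kt + 1)) := mul_le_mul_of_nonneg_left hds.le hKt0
        _ < ε := by
            rw [mul_div_assoc']
            rw [div_lt_iff₀ (by linarith : (0:ℝ) < Kt + 1)]
            rw [mul_comm]
            exact mul_lt_mul_of_pos_left (lt_add_one Kt) hε
    · refine ⟨CL * Kst, fun s t h1 h2 h3 => ?_⟩
      rw [e2]
      exact hHy s t h1 h2 h3
    · refine ⟨C1 * Kst + CX * (C1 * (ce * (K1 + C0 * M))), fun s t h1 h2 h3 => ?_⟩
      rw [e1]
      simp only [gubRemainder]
      exact hRz s t h1 h2 h3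
    · refine ⟨C2 * R2 + CX * CL * Kst + CX * C2 * ce2 * C1 * Kst,
        fun s t h1 h2 h3 => ?_⟩
      rw [e2]
      simp only [gubRemainder]
      exact key s t h1 h2 h3
  · -- the norm bound
    have hMG : K1 + C0 * M ≤ P * (1 + crp) := by
      have h1 : C0 * M ≤ C0 * crp := mul_le_mul_of_nonneg_left hMcrp hC0nn
      have h2 : 0 ≤ K1 * crp := mul_nonneg hK1nn hcrpnn
      calc K1 + C0 * M ≤ K1 + K1 * crp + C0 * crp + C0 := by linarith
        _ = P * (1 + crp) := by rw [hPdef]; ring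
    have hKstle : Kst ≤ QK * (1 + crp) := by
      have h1 : CX * (ce * (K1 + C0 * M)) ≤ CX * (ce * (P * (1 + crp))) :=
        mul_le_mul_of_nonneg_left (mul_le_mul_of_nonneg_left hMG cepos.le) hCXnn
      calc Kst = Rα + CX * (ce * (K1 + C0 * M)) := by rw [hKstdef]
        _ ≤ (1 + crp) + CX * (ce * (P * (1 + crp))) := by linarith [hRαcrp]
        _ = QK * (1 + crp) := by rw [hQKdef]; ring
    have hZ1 : scaleSupNorm 𝓑 (γ - σ) T (fun t => G (y t)) ≤ K1 + C0 * M :=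
      scaleSupNorm_le 𝓑 _ T _ _ hMGnn (fun t h1 h2 => hNGσ t h1 h2)
    have hZ2 : scaleSupNorm 𝓑 (γ - σ - α) T (fun t => DG (y t) (G (y t)))
        ≤ C1 * (ce * (K1 + C0 * M)) := by
      rw [e1]
      exact scaleSupNorm_le 𝓑 _ T _ _
        (mul_nonneg hC1nn (mul_nonneg cepos.le hMGnn)) (fun t h1 h2 => hNH t h1 h2)
    have hZ3 : scaleHolderNorm 𝓑 (γ - σ - 2 * α) α T (fun t => DG (y t) (G (y t)))
        ≤ CL * Kst := by
      rw [e2]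
      exact scaleHolderNorm2_le 𝓑 _ α T _ _ (mul_nonneg hCLnn hKstnn)
        (fun s t h1 h2 h3 => hHy s t h1 h2.le h3)
    have hZ4 : scaleHolderNorm2 𝓑 (γ - σ - α) α T
        (gubRemainder 𝓑 RP.X (fun t => G (y t)) fun t => DG (y t) (G (y t)))
        ≤ C1 * Kst + CX * (C1 * (ce * (K1 + C0 * M))) := by
      rw [e1]
      refine scaleHolderNorm2_le 𝓑 _ α T _ _ ?_ (fun s t h1 h2 h3 => ?_)
      · exact add_nonneg (mul_nonneg hC1nn hKstnn)
          (mul_nonneg hCXnn (mul_nonneg hC1nn (mul_nonneg cepos.le hMGnn)))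
      · simp only [gubRemainder]
        exact hRz s t h1 h2.le h3
    have hZ5 : scaleHolderNorm2 𝓑 (γ - σ - 2 * α) (2 * α) T
        (gubRemainder 𝓑 RP.X (fun t => G (y t)) fun t => DG (y t) (G (y t)))
        ≤ C2 * R2 + CX * CL * Kst + CX * C2 * ce2 * C1 * Kst := by
      rw [e2]
      refine scaleHolderNorm2_le 𝓑 _ (2 * α) T _ _ ?_ (fun s t h1 h2 h3 => ?_)
      · refine add_nonneg (add_nonneg (mul_nonneg hC2nn hR2nn)
          (mul_nonneg (mul_nonneg hCXnn hCLnn) hKstnn)) ?_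
        exact mul_nonneg (mul_nonneg (mul_nonneg (mul_nonneg hCXnn hC2nn) ce2pos.le) hC1nn)
          hKstnn
      · simp only [gubRemainder]
        exact key s t h1 h2.le h3
    have hsum : crpNorm 𝓑 α (γ - σ) T RP.X (fun t => G (y t))
        (fun t => DG (y t) (G (y t)))
        = scaleSupNorm 𝓑 (γ - σ) T (fun t => G (y t))
          + scaleSupNorm 𝓑 (γ - σ - α) T (fun t => DG (y t) (G (y t)))
          + scaleHolderNorm 𝓑 (γ - σ - 2 * α) α T (fun t => DG (y t) (G (y t)))
          + scaleHolderNorm2 𝓑 (γ - σ - α) α T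
            (gubRemainder 𝓑 RP.X (fun t => G (y t)) fun t => DG (y t) (G (y t)))
          + scaleHolderNorm2 𝓑 (γ - σ - 2 * α) (2 * α) T
            (gubRemainder 𝓑 RP.X (fun t => G (y t)) fun t => DG (y t) (G (y t))) := rfl
    rw [hsum]
    have hcrp1 : (0:ℝ) ≤ 1 + crp := by linarith
    have hT1 : K1 + C0 * M ≤ P * (1 + crp) := hMG
    have hT2 : C1 * (ce * (K1 + C0 * M)) ≤ C1 * ce * P * (1 + crp) := by
      calc C1 * (ce * (K1 + C0 * M)) ≤ C1 * (ce * (P * (1 + crp))) :=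
          mul_le_mul_of_nonneg_left (mul_le_mul_of_nonneg_left hMG cepos.le) hC1nn
        _ = C1 * ce * P * (1 + crp) := by ring
    have hT3 : CL * Kst ≤ CL * QK * (1 + crp) := by
      calc CL * Kst ≤ CL * (QK * (1 + crp)) := mul_le_mul_of_nonneg_left hKstle hCLnn
        _ = CL * QK * (1 + crp) := by ring
    have hT4 : C1 * Kst + CX * (C1 * (ce * (K1 + C0 * M)))
        ≤ (C1 * QK + CX * (C1 * (ce * P))) * (1 + crp) := by
      have hA : C1 * Kst ≤ C1 * (QK * (1 + crp)) := mul_le_mul_of_nonneg_left hKstle hC1nn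
      have hB : CX * (C1 * (ce * (K1 + C0 * M))) ≤ CX * (C1 * (ce * (P * (1 + crp)))) :=
        mul_le_mul_of_nonneg_left (mul_le_mul_of_nonneg_left
          (mul_le_mul_of_nonneg_left hMG cepos.le) hC1nn) hCXnn
      calc C1 * Kst + CX * (C1 * (ce * (K1 + C0 * M)))
          ≤ C1 * (QK * (1 + crp)) + CX * (C1 * (ce * (P * (1 + crp)))) := add_le_add hA hB
        _ = (C1 * QK + CX * (C1 * (ce * P))) * (1 + crp) := by ring
    have hT5 : C2 * R2 + CX * CL * Kst + CX * C2 * ce2 * C1 * Kst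
        ≤ (C2 + CX * CL * QK + CX * C2 * ce2 * C1 * QK) * (1 + crp) := by
      have hA : C2 * R2 ≤ C2 * (1 + crp) :=
        mul_le_mul_of_nonneg_left (by linarith [hR2crp]) hC2nn
      have hB : CX * CL * Kst ≤ CX * CL * (QK * (1 + crp)) :=
        mul_le_mul_of_nonneg_left hKstle (mul_nonneg hCXnn hCLnn)
      have hC' : CX * C2 * ce2 * C1 * Kst ≤ CX * C2 * ce2 * C1 * (QK * (1 + crp)) :=
        mul_le_mul_of_nonneg_left hKstle
          (mul_nonneg (mul_nonneg (mul_nonneg hCXnn hC2nn) ce2pos.le) hC1nn)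
      calc C2 * R2 + CX * CL * Kst + CX * C2 * ce2 * C1 * Kst
          ≤ C2 * (1 + crp) + CX * CL * (QK * (1 + crp))
            + CX * C2 * ce2 * C1 * (QK * (1 + crp)) := by linarith
        _ = (C2 + CX * CL * QK + CX * C2 * ce2 * C1 * QK) * (1 + crp) := by ring
    have hCfin' : (P + C1 * ce * P + CL * QK + (C1 * QK + CX * (C1 * (ce * P)))
        + (C2 + CX * CL * QK + CX * C2 * ce2 * C1 * QK)) * (1 + crp)
        ≤ Cfin * (1 + crp) := by
      refine mul_le_mul_of_nonneg_right ?_ hcrp1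
      rw [hCfin]
      linarith
    calc scaleSupNorm 𝓑 (γ - σ) T (fun t => G (y t))
          + scaleSupNorm 𝓑 (γ - σ - α) T (fun t => DG (y t) (G (y t)))
          + scaleHolderNorm 𝓑 (γ - σ - 2 * α) α T (fun t => DG (y t) (G (y t)))
          + scaleHolderNorm2 𝓑 (γ - σ - α) α T
            (gubRemainder 𝓑 RP.X (fun t => G (y t)) fun t => DG (y t) (G (y t)))
          + scaleHolderNorm2 𝓑 (γ - σ - 2 * α) (2 * α) T
            (gubRemainder 𝓑 RP.X (fun t => G (y t)) fun t => DG (y t) (G (y t)))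
        ≤ (K1 + C0 * M) + C1 * (ce * (K1 + C0 * M)) + CL * Kst
          + (C1 * Kst + CX * (C1 * (ce * (K1 + C0 * M))))
          + (C2 * R2 + CX * CL * Kst + CX * C2 * ce2 * C1 * Kst) := by
          exact add_le_add (add_le_add (add_le_add (add_le_add hZ1 hZ2) hZ3) hZ4) hZ5
      _ ≤ P * (1 + crp) + C1 * ce * P * (1 + crp) + CL * QK * (1 + crp)
          + (C1 * QK + CX * (C1 * (ce * P))) * (1 + crp)
          + (C2 + CX * CL * QK + CX * C2 * ce2 * C1 * QK) * (1 + crp) :=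
          add_le_add (add_le_add (add_le_add (add_le_add hT1 hT2) hT3) hT4) hT5
      _ = (P + C1 * ce * P + CL * QK + (C1 * QK + CX * (C1 * (ce * P)))
          + (C2 + CX * CL * QK + CX * C2 * ce2 * C1 * QK)) * (1 + crp) := by ring
      _ ≤ Cfin * (1 + crp) := hCfin'
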